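/- arXiv:1508.03574 — 6 statements merged into one kernel-verified Lean document; each statement's English description precedes it below -/
import Mathlib

section
/- If a graph G has an orientation D such that f(v) > d⁺_D(v) for every vertex v and the number of spanning Eulerian sub-digraphs of D with an even number of edges differs from the number with an odd number of edges, then G is f-choosable (i.e., G has a proper coloring from any list assignment L with |L(v)| ≥ f(v) for all v). -/
open scoped Classical

namespace BK

variable {V : Type*} [Fintype V] [DecidableEq V]

/-- Out-degree of a vertex in a digraph given by a finite set of arcs. -/
noncomputable def outDeg (D : Finset (V × V)) (v : V) : ℕ :=
  (D.filter (fun a => a.1 = v)).card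

/-- In-degree of a vertex in a digraph given by a finite set of arcs. -/
noncomputable def inDeg (D : Finset (V × V)) (v : V) : ℕ :=
  (D.filter (fun a => a.2 = v)).card

/-- `D` is an orientation of the edges of `G`: each edge of `G` gets exactly one direction. -/
def IsOrientation (G : SimpleGraph V) (D : Finset (V × V)) : Prop :=
  (∀ u v : V, G.Adj u v ↔ ((u, v) ∈ D ∨ (v, u) ∈ D)) ∧
    ∀ u v : V, (u, v) ∈ D → (v, u) ∉ D

/-- A (spanning) Eulerian sub-digraph: a subset of arcs with in-degree = out-degree everywhere. -/
def IsEulerianSub (D E : Finset (V × V)) : Prop :=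
  E ⊆ D ∧ ∀ v, outDeg E v = inDeg E v

/-- Number of spanning Eulerian sub-digraphs with an even number of arcs. -/
noncomputable def eulerEven (D : Finset (V × V)) : ℕ :=
  (D.powerset.filter (fun E => IsEulerianSub D E ∧ Even E.card)).card

/-- Number of spanning Eulerian sub-digraphs with an odd number of arcs. -/
noncomputable def eulerOdd (D : Finset (V × V)) : ℕ :=
  (D.powerset.filter (fun E => IsEulerianSub D E ∧ Odd E.card)).card

/-- `G` is `f`-AT: it has an Alon–Tarsi orientation for `f`. -/
def IsAT (G : SimpleGraph V) (f : V → ℕ) : Prop :=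
  ∃ D : Finset (V × V), IsOrientation G D ∧ (∀ v, outDeg D v < f v) ∧
    eulerEven D ≠ eulerOdd D

/-- `G` is `f`-choosable: properly colorable from any lists of sizes given by `f`. -/
def Choosable (G : SimpleGraph V) (f : V → ℕ) : Prop :=
  ∀ L : V → Finset ℕ, (∀ v, f v ≤ (L v).card) →
    ∃ c : V → ℕ, (∀ v, c v ∈ L v) ∧ ∀ u v, G.Adj u v → c u ≠ c v

/-- The induced subdigraph of `D` on `S` has a kernel. -/
def HasKernel (D : Finset (V × V)) (S : Finset V) : Prop :=
  ∃ I ⊆ S, (∀ u ∈ I, ∀ v ∈ I, (u, v) ∉ D) ∧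
    ∀ v ∈ S, v ∉ I → ∃ w ∈ I, (v, w) ∈ D

/-- Every induced subdigraph of `D` has a kernel. -/
def KernelPerfect (D : Finset (V × V)) : Prop :=
  ∀ S : Finset V, HasKernel D S

/-- `G` is `f`-KP: some loopless superdigraph of `G` (bidirected arcs allowed) is
kernel-perfect with all out-degrees less than `f`. -/
def IsKP (G : SimpleGraph V) (f : V → ℕ) : Prop :=
  ∃ D : Finset (V × V), (∀ a ∈ D, a.1 ≠ a.2) ∧
    (∀ u v, G.Adj u v → (u, v) ∈ D ∨ (v, u) ∈ D) ∧
    KernelPerfect D ∧ ∀ v, outDeg D v < f v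

end BK

namespace ATaux

open MvPolynomial Finset

variable {V : Type*} [Fintype V] [DecidableEq V]

lemma dvd_sub_bind (n : V) (a : ℚ) (P : MvPolynomial V ℚ) :
    (X n - C a) ∣ (P - bind₁ (fun v => if v = n then C a else X v) P) := by
  set g : V → MvPolynomial V ℚ := fun v => if v = n then C a else X v with hg
  induction P using MvPolynomial.induction_on with
  | C c => simp
  | add p q hp hq =>
      have h : p + q - bind₁ g (p + q) = (p - bind₁ g p) + (q - bind₁ g q) := by
        rw [map_add]; ring
      rw [h]; exact dvd_add hp hq
  | mul_X p v hp =>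
      have h : p * X v - bind₁ g (p * X v)
          = p * (X v - g v) + (p - bind₁ g p) * g v := by
        rw [map_mul, bind₁_X_right]; ring
      rw [h]
      refine dvd_add ?_ (hp.mul_right _)
      by_cases hv : v = n
      · subst hv
        have : g v = C a := if_pos rfl
        rw [this]
        exact dvd_mul_left _ _
      · have : g v = X v := if_neg hv
        rw [this, sub_self, mul_zero]
        exact dvd_zero _

lemma totalDegree_bind_le (g : V → MvPolynomial V ℚ) (hgd : ∀ v, (g v).totalDegree ≤ 1)
    (P : MvPolynomial V ℚ) : (bind₁ g P).totalDegree ≤ P.totalDegree := by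
  conv_lhs => rw [P.as_sum, map_sum]
  refine totalDegree_finsetSum_le fun m hm => ?_
  rw [bind₁_monomial]
  refine (totalDegree_mul _ _).trans ?_
  rw [totalDegree_C, zero_add]
  refine le_trans (totalDegree_finset_prod _ _) ?_
  refine le_trans (Finset.sum_le_sum fun v _ =>
    (totalDegree_pow _ _).trans (Nat.mul_le_mul_left _ (hgd v))) ?_
  simp only [mul_one]
  exact le_totalDegree hm

/-- Combinatorial Nullstellensatz (non-vanishing form) over ℚ. -/
lemma CN : ∀ (N : ℕ) (t : V → ℕ), (∑ v, t v) = N →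
    ∀ P : MvPolynomial V ℚ, P.totalDegree ≤ N →
      P.coeff (Finsupp.equivFunOnFinite.symm t) ≠ 0 →
      ∀ S : V → Finset ℚ, (∀ v, t v < (S v).card) →
      ∃ s : V → ℚ, (∀ v, s v ∈ S v) ∧ eval s P ≠ 0 := by
  intro N
  induction N with
  | zero =>
      intro t ht P hdeg hcoeff S hcard
      have ht0 : ∀ v, t v = 0 := by
        intro v
        exact Finset.sum_eq_zero_iff.mp ht v (mem_univ v)
      choose s hs using fun v => Finset.card_pos.mp (Nat.lt_of_le_of_lt (Nat.zero_le _) (hcard v))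
      refine ⟨s, hs, ?_⟩
      have hdeg0 : P.totalDegree = 0 := Nat.le_zero.mp hdeg
      have hPC : P = C (P.coeff 0) := by
        conv_lhs => rw [P.as_sum]
        have hsupp : ∀ m ∈ P.support, m = 0 := by
          intro m hm
          have := (totalDegree_eq_zero_iff V P).mp hdeg0 m hm
          ext x; exact this x
        rcases Finset.eq_empty_or_nonempty P.support with h | h
        · have hP0 : P = 0 := support_eq_empty.mp h
          simp [h, hP0]
        · obtain ⟨m, hm⟩ := h
          have hm0 : m = 0 := hsupp m hm
          have : P.support = {0} := by
            apply Finset.eq_singleton_iff_unique_mem.mpr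
            exact ⟨hm0 ▸ hm, fun x hx => hsupp x hx⟩
          rw [this, Finset.sum_singleton]
          rw [show ((0 : V →₀ ℕ)) = (0:V→₀ℕ) from rfl]
          exact congrFun monomial_zero' (P.coeff 0)
      have ht00 : (Finsupp.equivFunOnFinite.symm t) = 0 := by
        ext v; simp [ht0]
      rw [ht00] at hcoeff
      rw [hPC]
      simpa using hcoeff
  | succ N ih =>
      intro t hts P hdeg hcoeff S hcard
      have hex : ∃ n, 0 < t n := by
        by_contra h
        push_neg at h
        simp only [Nat.le_zero] at h
        rw [Finset.sum_eq_zero (fun v _ => h v)] at hts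
        omega
      obtain ⟨n, hn⟩ := hex
      obtain ⟨a, ha⟩ := Finset.card_pos.mp (Nat.lt_of_le_of_lt (Nat.zero_le _) (hcard n))
      set g : V → MvPolynomial V ℚ := fun v => if v = n then C a else X v with hg
      set R := bind₁ g P with hR
      obtain ⟨Q, hQ⟩ := dvd_sub_bind n a P
      set τ : V →₀ ℕ := Finsupp.equivFunOnFinite.symm t with hτdef
      have hτ : ∀ v, τ v = t v := fun v => rfl
      have hτsum : (τ.sum fun _ e => e) = N + 1 := by
        rw [Finsupp.sum_fintype]
        · exact hts
        · intro i; rfl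
      -- n is not a variable of R
      have hnR : n ∉ R.vars := by
        intro hmem
        obtain ⟨v, hv, hnv⟩ := Finset.mem_biUnion.mp (vars_bind₁ g P hmem)
        simp only [hg] at hnv
        by_cases h : v = n
        · rw [if_pos h, vars_C] at hnv
          exact absurd hnv (Finset.notMem_empty n)
        · rw [if_neg h, vars_X] at hnv
          exact h ((Finset.mem_singleton.mp hnv).symm)
      have hcoeffR : ∀ m : V →₀ ℕ, m n ≠ 0 → R.coeff m = 0 := by
        intro m hm
        by_contra h
        exact hnR ((mem_vars n).mpr ⟨m, mem_support_iff.mpr h, Finsupp.mem_support_iff.mpr hm⟩)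
      have hτn : τ n ≠ 0 := by rw [hτ]; omega
      -- Q ≠ 0
      have hQne : Q ≠ 0 := by
        intro h
        rw [h, mul_zero, sub_eq_zero] at hQ
        exact hcoeff (by rw [hQ]; exact hcoeffR τ hτn)
      -- degree bounds
      have hdegR : R.totalDegree ≤ N + 1 := by
        refine le_trans (totalDegree_bind_le g ?_ P) hdeg
        intro v
        rw [hg]
        dsimp only
        split_ifs
        · simp [totalDegree_C]
        · simp [totalDegree_X]
      have hdegPR : (P - R).totalDegree ≤ N + 1 :=
        le_trans (totalDegree_sub _ _) (max_le hdeg hdegR)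
      have hsum_add : ∀ (m : V →₀ ℕ), ((Finsupp.single n 1 + m).sum fun _ e => e)
          = 1 + (m.sum fun _ e => e) := by
        intro m
        rw [Finsupp.sum_add_index' (fun _ => rfl) (fun _ _ _ => rfl)]
        simp [Finsupp.sum_single_index]
      have hdegQ : Q.totalDegree ≤ N := by
        by_contra h
        push_neg at h
        have hsupp : Q.support.Nonempty := by
          rw [Finset.nonempty_iff_ne_empty, Ne, support_eq_empty]; exact hQne
        obtain ⟨m, hm, hms⟩ := Finset.exists_mem_eq_sup Q.support hsupp
          (fun m => m.sum fun _ e => e)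
        have hmdeg : (m.sum fun _ e => e) = Q.totalDegree := hms.symm
        have key : (P - R).coeff (Finsupp.single n 1 + m) = 0 := by
          apply coeff_eq_zero_of_totalDegree_lt
          have : ((Finsupp.single n 1 + m).sum fun _ e => e) = 1 + Q.totalDegree := by
            rw [hsum_add, hmdeg]
          rw [Finsupp.sum] at this
          rw [this]
          omega
        rw [hQ, sub_mul, coeff_sub, coeff_X_mul, coeff_C_mul] at key
        have hQm' : Q.coeff (Finsupp.single n 1 + m) = 0 := by
          apply coeff_eq_zero_of_totalDegree_lt
          have : ((Finsupp.single n 1 + m).sum fun _ e => e) = 1 + Q.totalDegree := by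
            rw [hsum_add, hmdeg]
          rw [Finsupp.sum] at this
          rw [this]; omega
        rw [hQm', mul_zero, sub_zero] at key
        exact (mem_support_iff.mp hm) key
      -- the new exponent vector
      set t' : V → ℕ := Function.update t n (t n - 1) with ht'
      set τ' : V →₀ ℕ := Finsupp.equivFunOnFinite.symm t' with hτ'def
      have hττ' : Finsupp.single n 1 + τ' = τ := by
        ext v
        rw [Finsupp.add_apply, Finsupp.single_apply]
        by_cases h : v = n
        · subst h
          show (if v = v then 1 else 0) + t' v = t v
          rw [if_pos rfl, ht']
          rw [Function.update_self]
          omega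
        · show (if n = v then 1 else 0) + t' v = t v
          rw [if_neg (fun hh => h hh.symm), ht', Function.update_of_ne h]
          omega
      have hcoeffQ : Q.coeff τ' = P.coeff τ := by
        have h1 : (P - R).coeff τ = P.coeff τ := by
          rw [coeff_sub, hcoeffR τ hτn, sub_zero]
        have h2 : ((X n - C a) * Q).coeff τ = Q.coeff τ' := by
          rw [sub_mul, coeff_sub, ← hττ', coeff_X_mul, coeff_C_mul]
          have : Q.coeff (Finsupp.single n 1 + τ') = 0 := by
            apply coeff_eq_zero_of_totalDegree_lt
            have : ((Finsupp.single n 1 + τ').sum fun _ e => e) = N + 1 := by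
              rw [hττ', hτsum]
            rw [Finsupp.sum] at this
            rw [this]; omega
          rw [hττ'] at this ⊢
          rw [this, mul_zero, sub_zero]
        rw [← hQ, h1] at h2
        exact h2.symm
      have hts' : (∑ v, t' v) = N := by
        have := Finset.sum_update_of_mem (Finset.mem_univ n) t (t n - 1)
        rw [ht', this]
        have h2 : ∑ v, t v = t n + ∑ v ∈ univ \ {n}, t v := by
          rw [← Finset.sum_update_of_mem (Finset.mem_univ n) t (t n)]
          congr 1
          ext v
          by_cases h : v = n
          · subst h; rw [Function.update_self]
          · rw [Function.update_of_ne h]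
        omega
      set S' : V → Finset ℚ := Function.update S n ((S n).erase a) with hS'
      have hcard' : ∀ v, t' v < (S' v).card := by
        intro v
        by_cases h : v = n
        · subst h
          rw [ht', hS', Function.update_self, Function.update_self,
            Finset.card_erase_of_mem ha]
          have := hcard v
          omega
        · rw [ht', hS', Function.update_of_ne h, Function.update_of_ne h]
          exact hcard v
      obtain ⟨s, hsS', hsQ⟩ := ih t' hts' Q hdegQ (by rw [hcoeffQ]; exact hcoeff) S' hcard'
      have hsn : s n ∈ (S n).erase a := by
        have := hsS' n
        rwa [hS', Function.update_self] at this
      have hsna : s n ≠ a := (Finset.mem_erase.mp hsn).1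
      have hsS : ∀ v, s v ∈ S v := by
        intro v
        by_cases h : v = n
        · subst h; exact (Finset.mem_erase.mp hsn).2
        · have := hsS' v
          rwa [hS', Function.update_of_ne h] at this
      -- evaluation identity
      have hPdecomp : P = R + (X n - C a) * Q := by
        rw [← hQ]; ring
      have hevalR : eval s R = eval (Function.update s n a) P := by
        rw [hR]
        have h1 : eval s (bind₁ g P) = eval (fun v => eval s (g v)) P := by
          show eval₂Hom (RingHom.id ℚ) s (bind₁ g P) = _
          rw [eval₂Hom_bind₁]
          rfl
        rw [h1]
        have hfun : (fun v => eval s (g v)) = Function.update s n a := by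
          funext v
          rw [Function.update_apply, hg]
          dsimp only
          split_ifs
          · simp
          · simp
        rw [hfun]
      have hevalP : eval s P = eval (Function.update s n a) P + (s n - a) * eval s Q := by
        conv_lhs => rw [hPdecomp]
        rw [map_add, map_mul, map_sub, eval_X, eval_C, hevalR]
      by_cases h : eval s P = 0
      · refine ⟨Function.update s n a, ?_, ?_⟩
        · intro v
          rw [Function.update_apply]
          by_cases hv : v = n
          · rw [if_pos hv, hv]; exact ha
          · rw [if_neg hv]; exact hsS v
        · intro h0
          rw [h0, zero_add] at hevalP
          rw [hevalP] at h
          exact (mul_ne_zero (sub_ne_zero.mpr hsna) hsQ) h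
      · exact ⟨s, hsS, h⟩

end ATaux

namespace Part2

open MvPolynomial Finset

variable {V : Type*} [Fintype V] [DecidableEq V]

lemma prod_X_eq {α : Type*} [DecidableEq α] (s : Finset α) (h : α → V) :
    (∏ a ∈ s, (X (h a) : MvPolynomial V ℚ))
      = monomial (∑ a ∈ s, Finsupp.single (h a) 1) 1 := by
  induction s using Finset.induction with
  | empty => simp [monomial_zero']
  | @insert a s hni ih =>
      rw [Finset.prod_insert hni, Finset.sum_insert hni, ih]
      rw [show (X (h _) : MvPolynomial V ℚ) = monomial (Finsupp.single (h _) 1) 1 from rfl,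
        monomial_mul, one_mul]

lemma coeff_graphPoly (D : Finset (V × V)) :
    (∏ a ∈ D, (X a.1 - X a.2 : MvPolynomial V ℚ)).coeff
      (Finsupp.equivFunOnFinite.symm fun v => BK.outDeg D v)
      = (BK.eulerEven D : ℚ) - (BK.eulerOdd D : ℚ) := by
  set τ : V →₀ ℕ := Finsupp.equivFunOnFinite.symm fun v => BK.outDeg D v with hτdef
  have hτ : ∀ v, τ v = BK.outDeg D v := fun v => rfl
  set μ : Finset (V × V) → (V →₀ ℕ) :=
    fun E => (∑ a ∈ E, Finsupp.single a.2 1) + ∑ a ∈ D \ E, Finsupp.single a.1 1 with hμ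
  have expand : ∏ a ∈ D, (X a.1 - X a.2 : MvPolynomial V ℚ)
      = ∑ E ∈ D.powerset, (-1 : MvPolynomial V ℚ) ^ E.card * monomial (μ E) 1 := by
    have h1 : ∀ a ∈ D, (X a.1 - X a.2 : MvPolynomial V ℚ) = (-X a.2) + X a.1 :=
      fun a _ => by ring
    rw [Finset.prod_congr rfl h1, Finset.prod_add]
    refine Finset.sum_congr rfl fun E hE => ?_
    have h2 : (∏ a ∈ E, (-X a.2 : MvPolynomial V ℚ))
        = (-1)^E.card * ∏ a ∈ E, (X a.2 : MvPolynomial V ℚ) := by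
      rw [← Finset.prod_const, ← Finset.prod_mul_distrib]
      exact Finset.prod_congr rfl fun a _ => by ring
    rw [h2, prod_X_eq E (fun a => a.2), prod_X_eq (D \ E) (fun a => a.1),
      mul_assoc, monomial_mul, one_mul]
  rw [expand, coeff_sum]
  have h3 : ∀ E ∈ D.powerset, coeff τ ((-1 : MvPolynomial V ℚ)^E.card * monomial (μ E) 1)
      = if μ E = τ then (-1:ℚ)^E.card else 0 := by
    intro E _
    have hC : ((-1 : MvPolynomial V ℚ))^E.card = C ((-1:ℚ)^E.card) := by
      rw [map_pow, map_neg, map_one]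
    rw [hC, coeff_C_mul, coeff_monomial]
    split_ifs <;> ring
  rw [Finset.sum_congr rfl h3, ← Finset.sum_filter]
  have hfilter : D.powerset.filter (fun E => μ E = τ)
      = D.powerset.filter (fun E => BK.IsEulerianSub D E) := by
    apply Finset.filter_congr
    intro E hE
    rw [Finset.mem_powerset] at hE
    have hle : ∀ v, BK.outDeg E v ≤ BK.outDeg D v :=
      fun v => Finset.card_le_card (Finset.filter_subset_filter _ hE)
    have hsd : ∀ v, BK.outDeg (D \ E) v = BK.outDeg D v - BK.outDeg E v := by
      intro v
      unfold BK.outDeg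
      rw [show (D \ E).filter (fun a => a.1 = v)
          = D.filter (fun a => a.1 = v) \ E.filter (fun a => a.1 = v) by
        ext a; simp only [Finset.mem_filter, Finset.mem_sdiff]; tauto]
      exact Finset.card_sdiff_of_subset (Finset.filter_subset_filter _ hE)
    have happ : ∀ v, μ E v = BK.inDeg E v + (BK.outDeg D v - BK.outDeg E v) := by
      intro v
      rw [hμ]
      dsimp only
      rw [Finsupp.add_apply, Finsupp.finset_sum_apply, Finsupp.finset_sum_apply]
      have e1 : (∑ a ∈ E, (Finsupp.single a.2 1 : V →₀ ℕ) v) = BK.inDeg E v := by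
        unfold BK.inDeg
        rw [Finset.card_filter]
        exact Finset.sum_congr rfl fun a _ => by rw [Finsupp.single_apply]
      have e2 : (∑ a ∈ D \ E, (Finsupp.single a.1 1 : V →₀ ℕ) v) = BK.outDeg (D \ E) v := by
        unfold BK.outDeg
        rw [Finset.card_filter]
        exact Finset.sum_congr rfl fun a _ => by rw [Finsupp.single_apply]
      rw [e1, e2, hsd v]
    constructor
    · intro h
      refine ⟨hE, fun v => ?_⟩
      have hv := DFunLike.congr_fun h v
      rw [happ v] at hv
      have hτv : τ v = BK.outDeg D v := hτ v
      have := hle v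
      omega
    · intro h
      ext v
      rw [happ v, hτ v]
      have := h.2 v
      have := hle v
      omega
  rw [hfilter]
  rw [← Finset.sum_filter_add_sum_filter_not
    (D.powerset.filter (fun E => BK.IsEulerianSub D E)) (fun E => Even E.card)]
  rw [Finset.filter_filter, Finset.filter_filter]
  have h4 : ∑ E ∈ D.powerset.filter (fun E => BK.IsEulerianSub D E ∧ Even E.card),
      ((-1:ℚ))^E.card = (BK.eulerEven D : ℚ) := by
    rw [Finset.sum_congr rfl (fun E hE => Even.neg_one_pow (Finset.mem_filter.mp hE).2.2),
      Finset.sum_const, nsmul_eq_mul, mul_one]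
    rfl
  have h5 : ∑ E ∈ D.powerset.filter (fun E => BK.IsEulerianSub D E ∧ ¬ Even E.card),
      ((-1:ℚ))^E.card = -(BK.eulerOdd D : ℚ) := by
    rw [Finset.sum_congr rfl (fun E hE =>
      Odd.neg_one_pow (Nat.not_even_iff_odd.mp (Finset.mem_filter.mp hE).2.2)),
      Finset.sum_const, nsmul_eq_mul, mul_neg_one]
    have : (D.powerset.filter (fun E => BK.IsEulerianSub D E ∧ ¬ Even E.card))
        = (D.powerset.filter (fun E => BK.IsEulerianSub D E ∧ Odd E.card)) := by
      apply Finset.filter_congr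
      intro E _
      rw [← Nat.not_even_iff_odd]
    rw [this]
    rfl
  rw [h4, h5]
  ring

end Part2

theorem stmt0' {V : Type*} [Fintype V] [DecidableEq V] (G : SimpleGraph V) (f : V → ℕ)
    (D : Finset (V × V))
    (hor : ∀ u v : V, G.Adj u v ↔ ((u, v) ∈ D ∨ (v, u) ∈ D))
    (hout : ∀ v, f v > BK.outDeg D v)
    (heul : BK.eulerEven D ≠ BK.eulerOdd D)
    (L : V → Finset ℕ) (hL : ∀ v, f v ≤ (L v).card) :
    ∃ c : V → ℕ, (∀ v, c v ∈ L v) ∧ ∀ u v, G.Adj u v → c u ≠ c v := by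
  classical
  set t : V → ℕ := fun v => BK.outDeg D v with htdef
  set P : MvPolynomial V ℚ := ∏ a ∈ D, (MvPolynomial.X a.1 - MvPolynomial.X a.2) with hP
  have hcardD : D.card = ∑ v, t v :=
    Finset.card_eq_sum_card_fiberwise (fun a _ => Finset.mem_univ a.1)
  have hdeg : P.totalDegree ≤ ∑ v, t v := by
    rw [hP, ← hcardD]
    refine le_trans (MvPolynomial.totalDegree_finset_prod _ _) ?_
    refine le_trans (Finset.sum_le_card_nsmul _ _ 1 (fun a _ => ?_)) (by simp)
    exact (MvPolynomial.totalDegree_sub _ _).trans (by simp [MvPolynomial.totalDegree_X])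
  have hcoeff : P.coeff (Finsupp.equivFunOnFinite.symm t) ≠ 0 := by
    rw [hP, Part2.coeff_graphPoly]
    intro h
    apply heul
    exact_mod_cast sub_eq_zero.mp h
  obtain ⟨s, hsS, hsP⟩ := ATaux.CN (∑ v, t v) t rfl P hdeg hcoeff
    (fun v => (L v).image (fun m : ℕ => (m : ℚ)))
    (fun v => by
      rw [Finset.card_image_of_injective _ Nat.cast_injective]
      exact lt_of_lt_of_le (hout v) (hL v))
  have hsL : ∀ v, ∃ m ∈ L v, (m : ℚ) = s v := fun v => Finset.mem_image.mp (hsS v)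
  choose c hc hceq using hsL
  refine ⟨c, hc, ?_⟩
  intro u v huv hcc
  have hfac : ∀ a ∈ D, s a.1 - s a.2 ≠ 0 := by
    have heval : MvPolynomial.eval s P = ∏ a ∈ D, (s a.1 - s a.2) := by
      rw [hP, map_prod]
      exact Finset.prod_congr rfl fun a _ => by simp
    rw [heval] at hsP
    exact Finset.prod_ne_zero_iff.mp hsP
  have hsuv : s u ≠ s v := by
    rcases (hor u v).mp huv with h | h
    · exact sub_ne_zero.mp (hfac _ h)
    · exact (sub_ne_zero.mp (hfac _ h)).symm
  exact hsuv (by rw [← hceq u, ← hceq v, hcc])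

/-- Alon–Tarsi theorem: an orientation with small out-degrees and differing numbers of
even and odd spanning Eulerian sub-digraphs implies `f`-choosability. -/
theorem stmt0 {V : Type*} [Fintype V] [DecidableEq V] (G : SimpleGraph V) (f : V → ℕ)
    (D : Finset (V × V)) (hor : BK.IsOrientation G D)
    (hout : ∀ v, f v > BK.outDeg D v)
    (heul : BK.eulerEven D ≠ BK.eulerOdd D) :
    BK.Choosable G f := by
  intro L hL
  exact stmt0' G f D hor.1 hout heul L hL
end

section
/- If D is a kernel-perfect orientation of a graph G and f(v) > d⁺_D(v) for every vertex v, then G is f-choosable. -/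
open scoped Classical

/-- Bondy–Boppana–Siegel: a kernel-perfect orientation with out-degrees below `f`
implies `f`-choosability. -/
theorem stmt1 {V : Type*} [Fintype V] [DecidableEq V] (G : SimpleGraph V) (f : V → ℕ)
    (D : Finset (V × V)) (hor : BK.IsOrientation G D)
    (hkp : BK.KernelPerfect D)
    (hout : ∀ v, f v > BK.outDeg D v) :
    BK.Choosable G f := by
  classical
  intro L hL
  suffices h : ∀ S : Finset V, ∀ L : V → Finset ℕ,
      (∀ v ∈ S, (D.filter (fun a => a.1 = v ∧ a.2 ∈ S)).card < (L v).card) →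
      ∃ c : V → ℕ, (∀ v ∈ S, c v ∈ L v) ∧
        ∀ u ∈ S, ∀ v ∈ S, G.Adj u v → c u ≠ c v by
    obtain ⟨c, hc1, hc2⟩ := h Finset.univ L (fun v _ => by
      have h1 : (D.filter (fun a => a.1 = v ∧ a.2 ∈ (Finset.univ : Finset V))).card
          ≤ BK.outDeg D v := by
        apply Finset.card_le_card
        intro a ha
        simp only [Finset.mem_filter] at ha ⊢
        exact ⟨ha.1, ha.2.1⟩
      exact lt_of_le_of_lt h1 ((hout v).trans_le (hL v)))
    exact ⟨c, fun v => hc1 v (Finset.mem_univ v),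
      fun u v huv => hc2 u (Finset.mem_univ u) v (Finset.mem_univ v) huv⟩
  intro S
  induction S using Finset.strongInduction with
  | _ S ih =>
    intro L hLc
    rcases eq_or_ne S ∅ with hS | hS
    · subst hS
      exact ⟨fun _ => 0, by simp, by simp⟩
    obtain ⟨v0, hv0⟩ := Finset.nonempty_of_ne_empty hS
    have hLv0 : (L v0).Nonempty := by
      rw [← Finset.card_pos]
      exact lt_of_le_of_lt (Nat.zero_le _) (hLc v0 hv0)
    obtain ⟨α, hα⟩ := hLv0
    set Sα : Finset V := S.filter (fun v => α ∈ L v) with hSα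
    obtain ⟨I, hIsub, hIind, hIker⟩ := hkp Sα
    have hISα : ∀ v ∈ I, v ∈ S ∧ α ∈ L v := by
      intro v hv
      have := hIsub hv
      rw [hSα, Finset.mem_filter] at this
      exact this
    have hv0α : v0 ∈ Sα := by rw [hSα, Finset.mem_filter]; exact ⟨hv0, hα⟩
    have hIne : I.Nonempty := by
      by_cases h0 : v0 ∈ I
      · exact ⟨v0, h0⟩
      · obtain ⟨w, hw, _⟩ := hIker v0 hv0α h0
        exact ⟨w, hw⟩
    set S' := S \ I with hS'
    have hsub : S' ⊂ S := by
      refine Finset.sdiff_ssubset (fun v hv => (hISα v hv).1) hIne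
    set L' : V → Finset ℕ := fun v => if v ∈ Sα then (L v).erase α else L v with hL'
    have hinv : ∀ v ∈ S', (D.filter (fun a => a.1 = v ∧ a.2 ∈ S')).card < (L' v).card := by
      intro v hv
      have hvS : v ∈ S := (Finset.mem_sdiff.mp hv).1
      have hvI : v ∉ I := (Finset.mem_sdiff.mp hv).2
      by_cases hvα : v ∈ Sα
      · obtain ⟨w, hwI, hvw⟩ := hIker v hvα hvI
        have hwS : w ∈ S := (hISα w hwI).1
        have hmem : (v, w) ∈ D.filter (fun a => a.1 = v ∧ a.2 ∈ S) := by
          rw [Finset.mem_filter]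
          exact ⟨hvw, rfl, hwS⟩
        have hss : D.filter (fun a => a.1 = v ∧ a.2 ∈ S') ⊆
            (D.filter (fun a => a.1 = v ∧ a.2 ∈ S)).erase (v, w) := by
          intro a ha
          simp only [Finset.mem_filter] at ha
          rw [Finset.mem_erase]
          constructor
          · rintro rfl
            exact (Finset.mem_sdiff.mp ha.2.2).2 hwI
          · simp only [Finset.mem_filter]
            exact ⟨ha.1, ha.2.1, (Finset.mem_sdiff.mp ha.2.2).1⟩
        have h1 := Finset.card_le_card hss
        rw [Finset.card_erase_of_mem hmem] at h1
        have h2 : 1 ≤ (D.filter (fun a => a.1 = v ∧ a.2 ∈ S)).card :=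
          Finset.card_pos.mpr ⟨(v, w), hmem⟩
        have h3 := hLc v hvS
        have hαv : α ∈ L v := by
          rw [hSα, Finset.mem_filter] at hvα; exact hvα.2
        have h4 : (L' v).card = (L v).card - 1 := by
          simp only [hL', if_pos hvα, Finset.card_erase_of_mem hαv]
        omega
      · have hss : D.filter (fun a => a.1 = v ∧ a.2 ∈ S') ⊆
            D.filter (fun a => a.1 = v ∧ a.2 ∈ S) := by
          intro a ha
          simp only [Finset.mem_filter] at ha ⊢
          exact ⟨ha.1, ha.2.1, (Finset.mem_sdiff.mp ha.2.2).1⟩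
        have h1 := Finset.card_le_card hss
        have h4 : (L' v) = L v := by simp only [hL', if_neg hvα]
        rw [h4]
        exact lt_of_le_of_lt h1 (hLc v hvS)
    obtain ⟨c, hc1, hc2⟩ := ih S' hsub L' hinv
    refine ⟨fun v => if v ∈ I then α else c v, ?_, ?_⟩
    · intro v hvS
      by_cases hvI : v ∈ I
      · simp only [if_pos hvI]
        exact (hISα v hvI).2
      · simp only [if_neg hvI]
        have hvS' : v ∈ S' := Finset.mem_sdiff.mpr ⟨hvS, hvI⟩
        have := hc1 v hvS'
        by_cases hvα : v ∈ Sα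
        · simp only [hL', if_pos hvα] at this
          exact Finset.mem_of_mem_erase this
        · simpa only [hL', if_neg hvα] using this
    · intro u huS v hvS hadj
      have hD : (u, v) ∈ D ∨ (v, u) ∈ D := (hor.1 u v).mp hadj
      have key : ∀ x ∈ S, x ∉ I → (fun w => if w ∈ I then α else c w) x ≠ α := by
        intro x hxS hxI
        simp only [if_neg hxI]
        have hxS' : x ∈ S' := Finset.mem_sdiff.mpr ⟨hxS, hxI⟩
        have hcx := hc1 x hxS'
        by_cases hxα : x ∈ Sα
        · simp only [hL', if_pos hxα] at hcx
          exact (Finset.mem_erase.mp hcx).1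
        · intro hcα
          apply hxα
          rw [hSα, Finset.mem_filter]
          simp only [hL', if_neg hxα] at hcx
          exact ⟨hxS, hcα ▸ hcx⟩
      by_cases huI : u ∈ I <;> by_cases hvI : v ∈ I
      · exfalso
        rcases hD with h | h
        · exact hIind u huI v hvI h
        · exact hIind v hvI u huI h
      · simp only [if_pos huI]
        exact fun h => key v hvS hvI h.symm
      · simp only [if_pos hvI]
        exact fun h => key u huS huI h
      · simp only [if_neg huI, if_neg hvI]
        exact hc2 u (Finset.mem_sdiff.mpr ⟨huS, huI⟩) v (Finset.mem_sdiff.mpr ⟨hvS, hvI⟩) hadj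
end

section
/- If a graph G is f-AT and e is an edge of G, then the graph G − e is also f-AT (with the same function f). -/
open scoped Classical

namespace ATAux
open Finset BK

set_option linter.unusedSectionVars false

variable {V : Type*} [Fintype V] [DecidableEq V]

noncomputable def rev (E : Finset (V × V)) : Finset (V × V) := E.image Prod.swap

@[simp] lemma mem_rev {E : Finset (V × V)} {x : V × V} : x ∈ rev E ↔ x.swap ∈ E := by
  constructor
  · rintro h
    simp only [rev, mem_image] at h
    obtain ⟨y, hy, rfl⟩ := h
    simpa using hy
  · intro h
    simp only [rev, mem_image]
    exact ⟨x.swap, h, by simp⟩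

@[simp] lemma rev_rev (E : Finset (V × V)) : rev (rev E) = E := by
  ext x; simp

lemma rev_card (E : Finset (V × V)) : (rev E).card = E.card :=
  Finset.card_image_of_injective _ Prod.swap_injective

lemma rev_subset {E F : Finset (V × V)} (h : E ⊆ F) : rev E ⊆ rev F := by
  intro x hx; simp only [mem_rev] at *; exact h hx

lemma inDeg_rev (E : Finset (V × V)) (w : V) : inDeg (rev E) w = outDeg E w := by
  have : (rev E).filter (fun a => a.2 = w) = rev (E.filter (fun a => a.1 = w)) := by
    ext ⟨p, q⟩; simp [mem_filter]
  rw [inDeg, this, rev_card, outDeg]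

lemma outDeg_rev (E : Finset (V × V)) (w : V) : outDeg (rev E) w = inDeg E w := by
  have : (rev E).filter (fun a => a.1 = w) = rev (E.filter (fun a => a.2 = w)) := by
    ext ⟨p, q⟩; simp [mem_filter]
  rw [outDeg, this, rev_card, inDeg]

lemma outDeg_union {A B : Finset (V × V)} (h : Disjoint A B) (w : V) :
    outDeg (A ∪ B) w = outDeg A w + outDeg B w := by
  rw [outDeg, filter_union, card_union_of_disjoint (disjoint_filter_filter h)]; rfl

lemma inDeg_union {A B : Finset (V × V)} (h : Disjoint A B) (w : V) :
    inDeg (A ∪ B) w = inDeg A w + inDeg B w := by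
  rw [inDeg, filter_union, card_union_of_disjoint (disjoint_filter_filter h)]; rfl

lemma outDeg_mono {A B : Finset (V × V)} (h : A ⊆ B) (w : V) :
    outDeg A w ≤ outDeg B w :=
  card_le_card (filter_subset_filter _ h)

lemma outDeg_sdiff_add {E X : Finset (V × V)} (h : E ⊆ X) (w : V) :
    outDeg (X \ E) w + outDeg E w = outDeg X w := by
  rw [← outDeg_union sdiff_disjoint w, sdiff_union_of_subset h]

lemma inDeg_sdiff_add {E X : Finset (V × V)} (h : E ⊆ X) (w : V) :
    inDeg (X \ E) w + inDeg E w = inDeg X w := by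
  rw [← inDeg_union sdiff_disjoint w, sdiff_union_of_subset h]

lemma outDeg_insert {E : Finset (V × V)} {a : V × V} (ha : a ∉ E) (w : V) :
    outDeg (insert a E) w = outDeg E w + if a.1 = w then 1 else 0 := by
  rw [outDeg, filter_insert]
  split
  · rw [card_insert_of_notMem (fun h => ha (mem_filter.mp h).1)]; rfl
  · simp [outDeg]

lemma inDeg_insert {E : Finset (V × V)} {a : V × V} (ha : a ∉ E) (w : V) :
    inDeg (insert a E) w = inDeg E w + if a.2 = w then 1 else 0 := by
  rw [inDeg, filter_insert]
  split
  · rw [card_insert_of_notMem (fun h => ha (mem_filter.mp h).1)]; rfl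
  · simp [inDeg]

/-- The signed count of subdigraphs with prescribed in-minus-out degree vector. -/
noncomputable def Nsum (X : Finset (V × V)) (g : V → ℤ) : ℤ :=
  ∑ E ∈ X.powerset.filter (fun E => ∀ w, (inDeg E w : ℤ) - outDeg E w = g w),
    (-1 : ℤ) ^ E.card

lemma Nsum_eq_euler_diff (D : Finset (V × V)) :
    Nsum D (fun _ => 0) = (eulerEven D : ℤ) - eulerOdd D := by
  have hS : D.powerset.filter
        (fun E => ∀ w, (inDeg E w : ℤ) - outDeg E w = (fun _ => (0:ℤ)) w)
      = D.powerset.filter (fun E => IsEulerianSub D E) := by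
    apply filter_congr
    intro E hE
    simp only [mem_powerset] at hE
    constructor
    · intro h
      refine ⟨hE, fun v => ?_⟩
      have h' : (inDeg E v : ℤ) - outDeg E v = 0 := h v
      omega
    · intro h w
      have := h.2 w
      simp only [this]
      ring
  rw [Nsum, hS,
    ← Finset.sum_filter_add_sum_filter_not (D.powerset.filter (fun E => IsEulerianSub D E))
      (fun E => Even E.card)]
  have e1 : ∑ E ∈ (D.powerset.filter (fun E => IsEulerianSub D E)).filter
      (fun E => Even E.card), (-1:ℤ)^E.card = eulerEven D := by
    rw [Finset.sum_congr rfl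
      (fun E hE => Even.neg_one_pow (Finset.mem_filter.mp hE).2)]
    rw [Finset.sum_const, eulerEven, Finset.filter_filter]
    simp
  have e2 : ∑ E ∈ (D.powerset.filter (fun E => IsEulerianSub D E)).filter
      (fun E => ¬ Even E.card), (-1:ℤ)^E.card = -(eulerOdd D) := by
    rw [Finset.sum_congr rfl
      (fun E hE => Odd.neg_one_pow (Nat.not_even_iff_odd.mp (Finset.mem_filter.mp hE).2))]
    rw [Finset.sum_const, eulerOdd, Finset.filter_filter]
    have hset : D.powerset.filter (fun a => IsEulerianSub D a ∧ ¬ Even a.card)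
        = D.powerset.filter (fun E => IsEulerianSub D E ∧ Odd E.card) := by
      apply Finset.filter_congr; intro E _; simp [Nat.not_even_iff_odd]
    rw [hset]
    simp
  rw [e1, e2]
  ring

lemma Nsum_insert (X : Finset (V × V)) (a : V × V) (ha : a ∉ X) (g : V → ℤ) :
    Nsum (insert a X) g = Nsum X g -
      Nsum X (fun w => g w - ((if a.2 = w then 1 else 0) - (if a.1 = w then 1 else 0))) := by
  classical
  set P : Finset (V × V) → Prop := fun E => ∀ w, (inDeg E w : ℤ) - outDeg E w = g w with hP
  have hpows : (insert a X).powerset = X.powerset ∪ X.powerset.image (insert a) :=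
    Finset.powerset_insert X a
  have hdisj : Disjoint (X.powerset.filter P) ((X.powerset.image (insert a)).filter P) := by
    rw [Finset.disjoint_left]
    intro E hE hE'
    simp only [Finset.mem_filter, Finset.mem_powerset, Finset.mem_image] at hE hE'
    obtain ⟨⟨F, hF, rfl⟩, -⟩ := hE'
    exact ha (hE.1 (Finset.mem_insert_self a F))
  have hinj : ∀ E ∈ X.powerset, a ∉ E := by
    intro E hE h
    exact ha (Finset.mem_powerset.mp hE h)
  have hstep : ∑ E ∈ (X.powerset.image (insert a)).filter P, (-1:ℤ) ^ E.card
      = - Nsum X (fun w => g w - ((if a.2 = w then 1 else 0) - (if a.1 = w then 1 else 0))) := by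
    rw [Finset.filter_image]
    rw [Finset.sum_image (by
      intro E hE F hF hEF
      have h1 : a ∉ E := hinj E (Finset.mem_filter.mp hE).1
      have h2 : a ∉ F := hinj F (Finset.mem_filter.mp hF).1
      have : (insert a E).erase a = (insert a F).erase a := by rw [hEF]
      rwa [Finset.erase_insert h1, Finset.erase_insert h2] at this)]
    have hfc : X.powerset.filter (fun E => P (insert a E))
        = X.powerset.filter (fun E => ∀ w, (inDeg E w : ℤ) - outDeg E w
            = g w - ((if a.2 = w then 1 else 0) - (if a.1 = w then 1 else 0))) := by
      apply Finset.filter_congr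
      intro E hE
      have haE : a ∉ E := hinj E hE
      simp only [hP]
      constructor
      · intro h w
        have := h w
        rw [inDeg_insert haE, outDeg_insert haE] at this
        push_cast [apply_ite (Nat.cast : ℕ → ℤ)] at this
        omega
      · intro h w
        have := h w
        rw [inDeg_insert haE, outDeg_insert haE]
        push_cast [apply_ite (Nat.cast : ℕ → ℤ)]
        omega
    have hcard : ∀ E ∈ X.powerset.filter (fun E => P (insert a E)),
        (-1:ℤ) ^ (insert a E).card = -((-1:ℤ) ^ E.card) := by
      intro E hE
      rw [Finset.card_insert_of_notMem (hinj E (Finset.mem_filter.mp hE).1), pow_succ]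
      ring
    calc ∑ E ∈ X.powerset.filter (fun E => P (insert a E)), (-1:ℤ) ^ (insert a E).card
        = ∑ E ∈ X.powerset.filter (fun E => P (insert a E)), -((-1:ℤ) ^ E.card) :=
          Finset.sum_congr rfl hcard
      _ = - ∑ E ∈ X.powerset.filter (fun E => P (insert a E)), (-1:ℤ) ^ E.card :=
          Finset.sum_neg_distrib _
      _ = - Nsum X (fun w => g w - ((if a.2 = w then 1 else 0) - (if a.1 = w then 1 else 0))) := by
          rw [Nsum, hfc]
  rw [Nsum, hpows, Finset.filter_union, Finset.sum_union hdisj, hstep]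
  have hNg : Nsum X g = ∑ E ∈ X.powerset.filter P, (-1:ℤ) ^ E.card := rfl
  rw [hNg]
  ring

/-- Reverse the arcs of `E` inside an ambient digraph containing `F`. -/
noncomputable def Phi (E F : Finset (V × V)) : Finset (V × V) := (F \ E) ∪ rev (E \ F)

lemma mem_Phi {E F : Finset (V × V)} {x : V × V} :
    x ∈ Phi E F ↔ (x ∈ F ∧ x ∉ E) ∨ (x.swap ∈ E ∧ x.swap ∉ F) := by
  simp [Phi, Finset.mem_union, Finset.mem_sdiff, mem_rev]

lemma disjoint_rev {X E : Finset (V × V)} (h2 : ∀ x : V × V, x ∈ X → x.swap ∉ X)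
    (hE : E ⊆ X) : Disjoint X (rev E) := by
  rw [Finset.disjoint_left]
  intro x hx hx'
  exact h2 x hx (hE (mem_rev.mp hx'))

lemma Phi_subset {X E F : Finset (V × V)} (hE : E ⊆ X) (hF : F ⊆ X) :
    Phi E F ⊆ (X \ E) ∪ rev E := by
  intro x hx
  rcases mem_Phi.mp hx with ⟨h1, h2⟩ | ⟨h1, h2⟩
  · exact Finset.mem_union_left _ (Finset.mem_sdiff.mpr ⟨hF h1, h2⟩)
  · exact Finset.mem_union_right _ (mem_rev.mpr h1)

lemma Phi_inv {X E F : Finset (V × V)} (h2 : ∀ x : V × V, x ∈ X → x.swap ∉ X)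
    (hE : E ⊆ X) (hF : F ⊆ X) : Phi (rev E) (Phi E F) = F := by
  ext x
  have hxF : x ∈ F → x ∈ X := fun h => hF h
  have hxE : x ∈ E → x ∈ X := fun h => hE h
  have hsF : x.swap ∈ F → x.swap ∈ X := fun h => hF h
  have hsE : x.swap ∈ E → x.swap ∈ X := fun h => hE h
  have h2x : x ∈ X → x.swap ∉ X := h2 x
  have h2s : x.swap ∈ X → x ∉ X := fun h hh => h2 x hh (by simpa using h)
  simp only [mem_Phi, mem_rev, Prod.swap_swap]
  tauto

lemma neg_one_pow_Phi {E F : Finset (V × V)} (h : Disjoint F (rev E)) :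
    (-1 : ℤ) ^ (Phi E F).card = (-1 : ℤ) ^ (F.card + E.card) := by
  have hd : Disjoint (F \ E) (rev (E \ F)) :=
    (h.mono (Finset.sdiff_subset) (rev_subset (Finset.sdiff_subset)))
  have hc : (Phi E F).card = (F \ E).card + (E \ F).card := by
    rw [Phi, Finset.card_union_of_disjoint hd, rev_card]
  have h1 : (F \ E).card + (F ∩ E).card = F.card := Finset.card_sdiff_add_card_inter F E
  have h2 : (E \ F).card + (E ∩ F).card = E.card := Finset.card_sdiff_add_card_inter E F
  have h3 : (F ∩ E).card = (E ∩ F).card := by rw [Finset.inter_comm]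
  have hsum : F.card + E.card = (Phi E F).card + 2 * (F ∩ E).card := by omega
  rw [hsum, pow_add, pow_mul]
  norm_num

lemma deg_Phi {E F : Finset (V × V)} (h : Disjoint F (rev E)) (w : V) :
    (inDeg (Phi E F) w : ℤ) - outDeg (Phi E F) w
      = ((inDeg F w : ℤ) - outDeg F w) - ((inDeg E w : ℤ) - outDeg E w) := by
  have hd : Disjoint (F \ E) (rev (E \ F)) :=
    (h.mono (Finset.sdiff_subset) (rev_subset (Finset.sdiff_subset)))
  have hi : inDeg (Phi E F) w = inDeg (F \ E) w + outDeg (E \ F) w := by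
    rw [Phi, inDeg_union hd, inDeg_rev]
  have ho : outDeg (Phi E F) w = outDeg (F \ E) w + inDeg (E \ F) w := by
    rw [Phi, outDeg_union hd, outDeg_rev]
  have hFi : inDeg (F \ E) w + inDeg (F ∩ E) w = inDeg F w := by
    rw [← inDeg_union (Finset.disjoint_sdiff_inter F E) w, Finset.sdiff_union_inter]
  have hFo : outDeg (F \ E) w + outDeg (F ∩ E) w = outDeg F w := by
    rw [← outDeg_union (Finset.disjoint_sdiff_inter F E) w, Finset.sdiff_union_inter]
  have hEi : inDeg (E \ F) w + inDeg (E ∩ F) w = inDeg E w := by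
    rw [← inDeg_union (Finset.disjoint_sdiff_inter E F) w, Finset.sdiff_union_inter]
  have hEo : outDeg (E \ F) w + outDeg (E ∩ F) w = outDeg E w := by
    rw [← outDeg_union (Finset.disjoint_sdiff_inter E F) w, Finset.sdiff_union_inter]
  have hic : inDeg (F ∩ E) w = inDeg (E ∩ F) w := by rw [Finset.inter_comm]
  have hoc : outDeg (F ∩ E) w = outDeg (E ∩ F) w := by rw [Finset.inter_comm]
  push_cast [hi, ho]
  omega

lemma h2_reversed {X E : Finset (V × V)} (h2 : ∀ x : V × V, x ∈ X → x.swap ∉ X)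
    (hE : E ⊆ X) : ∀ x : V × V, x ∈ (X \ E) ∪ rev E → x.swap ∉ (X \ E) ∪ rev E := by
  intro x hx hsx
  have hxX : (x ∈ X ∧ x ∉ E) ∨ x.swap ∈ E := by
    rcases Finset.mem_union.mp hx with h | h
    · exact Or.inl (Finset.mem_sdiff.mp h)
    · exact Or.inr (mem_rev.mp h)
  have hsxX : (x.swap ∈ X ∧ x.swap ∉ E) ∨ x ∈ E := by
    rcases Finset.mem_union.mp hsx with h | h
    · exact Or.inl (Finset.mem_sdiff.mp h)
    · exact Or.inr (by simpa using mem_rev.mp h)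
  have hxE : x ∈ E → x ∈ X := fun h => hE h
  have hsxE : x.swap ∈ E → x.swap ∈ X := fun h => hE h
  have h2x : x ∈ X → x.swap ∉ X := h2 x
  tauto

lemma Xr_sdiff {X E : Finset (V × V)} (h2 : ∀ x : V × V, x ∈ X → x.swap ∉ X)
    (hE : E ⊆ X) : ((X \ E) ∪ rev E) \ rev E = X \ E := by
  rw [Finset.union_sdiff_right]
  exact Finset.sdiff_eq_self_of_disjoint
    ((disjoint_rev h2 hE).mono_left Finset.sdiff_subset)

lemma Nsum_reverse (X E : Finset (V × V)) (h2 : ∀ x : V × V, x ∈ X → x.swap ∉ X)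
    (hE : E ⊆ X) :
    Nsum ((X \ E) ∪ rev E) (fun _ => 0)
      = (-1 : ℤ) ^ E.card * Nsum X (fun w => (inDeg E w : ℤ) - outDeg E w) := by
  classical
  set Xr := (X \ E) ∪ rev E with hXr
  have h2r : ∀ x : V × V, x ∈ Xr → x.swap ∉ Xr := h2_reversed h2 hE
  have hrevE : rev E ⊆ Xr := Finset.subset_union_right
  have hXrX : (Xr \ rev E) ∪ rev (rev E) = X := by
    rw [Xr_sdiff h2 hE, rev_rev, Finset.sdiff_union_of_subset hE]
  rw [Nsum, Nsum, Finset.mul_sum]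
  have hXrE : Disjoint Xr E := by
    have h := disjoint_rev h2r hrevE
    rwa [rev_rev] at h
  refine Finset.sum_nbij' (i := Phi (rev E)) (j := Phi E) ?_ ?_ ?_ ?_ ?_
  · intro F hF
    rw [Finset.mem_filter, Finset.mem_powerset] at hF ⊢
    obtain ⟨hFsub, hcond⟩ := hF
    have hdisj : Disjoint F (rev (rev E)) := by
      rw [rev_rev]; exact hXrE.mono_left hFsub
    constructor
    · have := Phi_subset (X := Xr) hrevE hFsub
      rwa [hXrX] at this
    · intro w
      rw [deg_Phi hdisj w, hcond w, inDeg_rev, outDeg_rev]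
      ring
  · intro F hF
    rw [Finset.mem_filter, Finset.mem_powerset] at hF ⊢
    obtain ⟨hFsub, hcond⟩ := hF
    have hdisj : Disjoint F (rev E) := (disjoint_rev h2 hE).mono_left hFsub
    refine ⟨Phi_subset hE hFsub, fun w => ?_⟩
    rw [deg_Phi hdisj w, hcond w]
    ring
  · intro F hF
    rw [Finset.mem_filter, Finset.mem_powerset] at hF
    have h := Phi_inv (X := Xr) h2r hrevE hF.1
    rwa [rev_rev] at h
  · intro F hF
    rw [Finset.mem_filter, Finset.mem_powerset] at hF
    exact Phi_inv h2 hE hF.1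
  · intro F hF
    rw [Finset.mem_filter, Finset.mem_powerset] at hF
    have hdisj : Disjoint F (rev (rev E)) := by
      rw [rev_rev]; exact hXrE.mono_left hF.1
    rw [neg_one_pow_Phi hdisj, rev_card, pow_add]
    have hsq : ((-1:ℤ) ^ E.card) * ((-1:ℤ) ^ E.card) = 1 := by
      rw [← pow_add, ← two_mul, pow_mul]
      norm_num
    linear_combination (-((-1:ℤ) ^ F.card)) * hsq

lemma mem_or_reversed {X E : Finset (V × V)} (hE : E ⊆ X) (p q : V) :
    ((p, q) ∈ (X \ E) ∪ rev E ∨ (q, p) ∈ (X \ E) ∪ rev E) ↔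
      ((p, q) ∈ X ∨ (q, p) ∈ X) := by
  simp only [Finset.mem_union, Finset.mem_sdiff, mem_rev, Prod.swap_prod_mk]
  have h1 : (p, q) ∈ E → (p, q) ∈ X := fun h => hE h
  have h2 : (q, p) ∈ E → (q, p) ∈ X := fun h => hE h
  tauto

lemma main_key (G : SimpleGraph V) (f : V → ℕ) (D : Finset (V × V))
    (hadj : ∀ p q, G.Adj p q ↔ ((p, q) ∈ D ∨ (q, p) ∈ D))
    (h2o : ∀ p q, (p, q) ∈ D → (q, p) ∉ D) (hdeg : ∀ w, outDeg D w < f w)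
    (hne : eulerEven D ≠ eulerOdd D) (u v : V) (haD : (u, v) ∈ D) :
    IsAT (G.deleteEdges {s(u, v)}) f := by
  classical
  have hadjuv : G.Adj u v := (hadj u v).mpr (Or.inl haD)
  have huv : u ≠ v := G.ne_of_adj hadjuv
  set D' := D.erase (u, v) with hD'
  have ha' : (u, v) ∉ D' := Finset.notMem_erase _ _
  have hD'sub : D' ⊆ D := Finset.erase_subset _ _
  have hins : insert (u, v) D' = D := Finset.insert_erase haD
  have h2' : ∀ x : V × V, x ∈ D' → x.swap ∉ D' := by
    rintro ⟨p, q⟩ hx hy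
    exact h2o p q (hD'sub hx) (hD'sub hy)
  have h2o' : ∀ p q : V, (p, q) ∈ D' → (q, p) ∉ D' := fun p q hx hy => h2' (p, q) hx hy
  -- orientation property of D' for the edge-deleted graph
  have hadj' : ∀ p q, (G.deleteEdges {s(u, v)}).Adj p q ↔ ((p, q) ∈ D' ∨ (q, p) ∈ D') := by
    intro p q
    constructor
    · intro hpq
      rw [SimpleGraph.deleteEdges_adj, Set.mem_singleton_iff] at hpq
      obtain ⟨hG', hnot⟩ := hpq
      rcases (hadj p q).mp hG' with h | h
      · left
        refine Finset.mem_erase.mpr ⟨?_, h⟩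
        intro hEq
        injection hEq with h1 h2
        subst h1; subst h2
        exact hnot rfl
      · right
        refine Finset.mem_erase.mpr ⟨?_, h⟩
        intro hEq
        injection hEq with h1 h2
        subst h1; subst h2
        exact hnot Sym2.eq_swap
    · intro h
      rw [SimpleGraph.deleteEdges_adj, Set.mem_singleton_iff]
      rcases h with h | h
      · obtain ⟨hne2, hmem⟩ := Finset.mem_erase.mp h
        refine ⟨(hadj p q).mpr (Or.inl hmem), fun hEq => ?_⟩
        rcases Sym2.eq_iff.mp hEq with ⟨rfl, rfl⟩ | ⟨rfl, rfl⟩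
        · exact hne2 rfl
        · exact absurd haD (h2o p q hmem)
      · obtain ⟨hne2, hmem⟩ := Finset.mem_erase.mp h
        refine ⟨(hadj p q).mpr (Or.inr hmem), fun hEq => ?_⟩
        rcases Sym2.eq_iff.mp hEq with ⟨rfl, rfl⟩ | ⟨rfl, rfl⟩
        · exact absurd hmem (h2o p q haD)
        · exact hne2 rfl
  have hND : Nsum D (fun _ => 0) ≠ 0 := by
    rw [Nsum_eq_euler_diff]
    intro h
    exact hne (by exact_mod_cast sub_eq_zero.mp h)
  by_cases h0 : eulerEven D' = eulerOdd D'
  · -- need to reverse a subdigraph of D'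
    have hND' : Nsum D' (fun _ => 0) = 0 := by
      rw [Nsum_eq_euler_diff, h0, sub_self]
    have hsplit := Nsum_insert D' (u, v) ha' (fun _ => 0)
    rw [hins, hND'] at hsplit
    set g₁ : V → ℤ :=
      fun w => (0 : ℤ) - ((if ((u, v) : V × V).2 = w then 1 else 0) -
        (if ((u, v) : V × V).1 = w then 1 else 0)) with hg₁
    have hNg₁ : Nsum D' g₁ ≠ 0 := by
      intro h
      rw [hg₁] at h
      rw [h, sub_zero] at hsplit
      exact hND hsplit
    obtain ⟨E, hEmem, -⟩ := Finset.exists_ne_zero_of_sum_ne_zero hNg₁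
    rw [Finset.mem_filter, Finset.mem_powerset] at hEmem
    obtain ⟨hEsub, hcond⟩ := hEmem
    set Dt := (D' \ E) ∪ rev E with hDt
    have hdisj2 : Disjoint (D' \ E) (rev E) :=
      (disjoint_rev h2' hEsub).mono_left Finset.sdiff_subset
    have hNrev := Nsum_reverse D' E h2' hEsub
    have hgE : (fun w => (inDeg E w : ℤ) - outDeg E w) = g₁ := funext hcond
    rw [hgE] at hNrev
    have hNDt : Nsum Dt (fun _ => 0) ≠ 0 := by
      rw [hDt, hNrev]
      exact mul_ne_zero (pow_ne_zero _ (by norm_num)) hNg₁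
    refine ⟨Dt, ⟨?_, ?_⟩, ?_, ?_⟩
    · intro p q
      rw [hadj' p q, ← mem_or_reversed hEsub p q]
    · intro p q hx hy
      exact h2_reversed h2' hEsub (p, q) hx hy
    · intro w
      have hout : outDeg Dt w = outDeg (D' \ E) w + inDeg E w := by
        rw [hDt, outDeg_union hdisj2, outDeg_rev]
      have h3 : outDeg (D' \ E) w + outDeg E w = outDeg D' w := outDeg_sdiff_add hEsub w
      have h4 : outDeg D' w ≤ outDeg D w := outDeg_mono hD'sub w
      have h5 := hcond w
      have h6 : outDeg D u = outDeg D' u + 1 := by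
        conv_lhs => rw [← hins]
        rw [outDeg_insert ha']
        simp
      have h7 := hdeg w
      rw [hg₁] at h5
      by_cases hu : u = w
      · subst hu
        have h8 := hdeg u
        simp only [if_pos rfl, if_neg (fun h : v = u => huv h.symm)] at h5
        omega
      · by_cases hv : v = w
        · subst hv
          simp only [if_pos rfl, if_neg hu] at h5
          omega
        · simp only [if_neg hu, if_neg hv] at h5
          omega
    · intro h
      apply hNDt
      rw [Nsum_eq_euler_diff, h, sub_self]
  · -- D' itself works
    refine ⟨D', ⟨hadj', h2o'⟩, fun w => lt_of_le_of_lt (outDeg_mono hD'sub w) (hdeg w), h0⟩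

end ATAux
/-- If `G` is `f`-AT and `e ∈ E(G)`, then `G − e` is `f`-AT. -/
theorem stmt2 {V : Type*} [Fintype V] [DecidableEq V] (G : SimpleGraph V) (f : V → ℕ)
    (hG : BK.IsAT G f) (e : Sym2 V) (he : e ∈ G.edgeSet) :
    BK.IsAT (G.deleteEdges {e}) f := by
  classical
  obtain ⟨D, ⟨hadj, h2o⟩, hdeg, hne⟩ := hG
  induction e using Sym2.ind with
  | _ u v =>
    have huv : G.Adj u v := (SimpleGraph.mem_edgeSet G).mp he
    rcases (hadj u v).mp huv with h | h
    · exact ATAux.main_key G f D hadj h2o hdeg hne u v h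
    · have hres := ATAux.main_key G f D hadj h2o hdeg hne v u h
      rwa [show (s(v, u) : Sym2 V) = s(u, v) from Sym2.eq_swap] at hres
end

section
/- Let g ∈ F[x_1,…,x_n] be a polynomial and k_1,…,k_n ∈ ℕ with k_1+⋯+k_n = deg(g). For any subsets C_1,…,C_n ⊆ F with |C_i| = k_i + 1, the coefficient of x_1^{k_1}⋯x_n^{k_n} in g equals the sum over all (c_1,…,c_n) ∈ C_1×⋯×C_n of g(c_1,…,c_n)/N(c_1,…,c_n), where N(c_1,…,c_n) = ∏_{i=1}^n ∏_{d ∈ C_i∖{c_i}} (c_i − d). -/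
open scoped Classical

open Polynomial in
lemma key1 {F : Type*} [Field F] [DecidableEq F] (s : Finset F) (a : ℕ) (ha : a < s.card) :
    ∑ c ∈ s, c ^ a / ∏ d ∈ s.erase c, (c - d) = if a = s.card - 1 then 1 else 0 := by
  have hinj : Set.InjOn (id : F → F) (s : Set F) := Function.injective_id.injOn
  have hdeg : (X ^ a : F[X]).degree < s.card := by
    rw [degree_X_pow]; exact_mod_cast ha
  have hX := Lagrange.eq_interpolate (v := id) (f := (X : F[X]) ^ a) hinj hdeg
  have hc := congrArg (fun p : F[X] => p.coeff (s.card - 1)) hX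
  simp only [Lagrange.interpolate_apply, eval_pow, eval_X, id] at hc
  rw [coeff_X_pow, Polynomial.finset_sum_coeff] at hc
  have hb : ∀ c ∈ s, ((Polynomial.C (c ^ a) * Lagrange.basis s id c).coeff (s.card - 1))
      = c ^ a / ∏ d ∈ s.erase c, (c - d) := by
    intro c hc'
    rw [coeff_C_mul]
    have hnd : (Lagrange.basis s id c).natDegree = s.card - 1 :=
      Lagrange.natDegree_basis hinj hc'
    have h1 : (Lagrange.basis s id c).coeff (s.card - 1)
        = (Lagrange.basis s id c).leadingCoeff := by
      rw [Polynomial.leadingCoeff, hnd]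
    have hlc : (Lagrange.basis s id c).leadingCoeff
        = ∏ d ∈ s.erase c, (c - d)⁻¹ := by
      rw [Lagrange.basis, Polynomial.leadingCoeff_prod]
      refine Finset.prod_congr rfl fun d _ => ?_
      rw [Lagrange.basisDivisor, Polynomial.leadingCoeff_mul, Polynomial.leadingCoeff_C,
        (Polynomial.monic_X_sub_C _).leadingCoeff, mul_one]
      rfl
    rw [h1, hlc, div_eq_mul_inv, Finset.prod_inv_distrib]
  rw [Finset.sum_congr rfl hb] at hc
  rw [← hc]
  by_cases h : a = s.card - 1 <;> simp [h, eq_comm]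

/-- The Schauz/Hefetz/Lasoń coefficient formula sharpening the Combinatorial
Nullstellensatz. -/
theorem stmt5 {F : Type*} [Field F] [DecidableEq F] {n : ℕ}
    (g : MvPolynomial (Fin n) F) (k : Fin n → ℕ)
    (hdeg : ∑ i, k i = g.totalDegree)
    (C : Fin n → Finset F) (hC : ∀ i, (C i).card = k i + 1) :
    g.coeff (Finsupp.equivFunOnFinite.symm k) =
      ∑ c ∈ Fintype.piFinset C,
        (MvPolynomial.eval c g) / ∏ i, ∏ d ∈ (C i).erase (c i), (c i - d) := by
  classical
  set k' : (Fin n) →₀ ℕ := Finsupp.equivFunOnFinite.symm k with hk'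
  have hk'app : ∀ i, k' i = k i := fun i => rfl
  -- rewrite RHS
  have step1 : ∀ c : Fin n → F,
      (MvPolynomial.eval c g) / ∏ i, ∏ d ∈ (C i).erase (c i), (c i - d)
      = ∑ a ∈ g.support, g.coeff a *
          ∏ i, (c i ^ a i / ∏ d ∈ (C i).erase (c i), (c i - d)) := by
    intro c
    rw [MvPolynomial.eval_eq', Finset.sum_div]
    refine Finset.sum_congr rfl fun a _ => ?_
    rw [mul_div_assoc, ← Finset.prod_div_distrib]
  rw [Finset.sum_congr rfl (fun c _ => step1 c), Finset.sum_comm]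
  have step2 : ∀ a ∈ g.support,
      ∑ c ∈ Fintype.piFinset C, g.coeff a *
          ∏ i, (c i ^ a i / ∏ d ∈ (C i).erase (c i), (c i - d))
      = g.coeff a * ∏ i, ∑ x ∈ C i, (x ^ a i / ∏ d ∈ (C i).erase x, (x - d)) := by
    intro a _
    rw [← Finset.mul_sum, Finset.prod_univ_sum]
  rw [Finset.sum_congr rfl step2]
  have step3 : ∀ a ∈ g.support,
      (∏ i, ∑ x ∈ C i, (x ^ a i / ∏ d ∈ (C i).erase x, (x - d)))
      = if a = k' then 1 else 0 := by
    intro a ha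
    have hsum : ∑ i, a i ≤ ∑ i, k i := by
      rw [hdeg]
      have := MvPolynomial.le_totalDegree ha
      rwa [Finsupp.sum_fintype _ _ (fun _ => rfl)] at this
    by_cases hak : a = k'
    · subst hak
      rw [if_pos rfl]
      refine Finset.prod_eq_one fun i _ => ?_
      rw [hk'app i, key1 (C i) (k i) (by rw [hC i]; omega), hC i, if_pos (by omega)]
    · rw [if_neg hak]
      have hexists : ∃ i, a i < k i := by
        by_contra hcon
        push_neg at hcon
        have heq : ∑ i, a i = ∑ i, k i :=
          le_antisymm hsum (Finset.sum_le_sum fun i _ => hcon i)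
        have hall := (Finset.sum_eq_sum_iff_of_le (fun i _ => hcon i)).mp heq.symm
        exact hak (Finsupp.ext fun i => (hall i (Finset.mem_univ i)).symm)
      obtain ⟨i, hi⟩ := hexists
      refine Finset.prod_eq_zero (Finset.mem_univ i) ?_
      rw [key1 (C i) (a i) (by rw [hC i]; omega), hC i, if_neg (by omega)]
  calc g.coeff k' = ∑ a ∈ g.support, g.coeff a * (if a = k' then 1 else 0) := by
        simp only [mul_ite, mul_one, mul_zero, Finset.sum_ite_eq']
        by_cases h : k' ∈ g.support
        · rw [if_pos h]
        · rw [if_neg h, MvPolynomial.notMem_support_iff.mp h]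
    _ = _ := by
        exact (Finset.sum_congr rfl fun a ha => by rw [step3 a ha]).symm
end

section
/- Let G = K_s ∗ K_{2*t} (the join of a complete graph on s vertices with the complete multipartite graph with t parts of size 2), let A be an (s+t)-clique in G, and let B = V(G) ∖ A. Then G is f-AT whenever f(v) ≥ s + t for all v ∈ A and f(v) ≥ t for all v ∈ B. -/
open scoped Classical

/-- The join `K_s ∗ K_{2*t}` of a complete graph on `s` vertices and the complete
multipartite graph with `t` parts of size 2. -/
def KsJoinK2t (s t : ℕ) : SimpleGraph ((Fin s) ⊕ (Fin t × Fin 2)) :=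
  SimpleGraph.fromRel
    (fun u v => ∀ a b : Fin t × Fin 2, u = Sum.inr a → v = Sum.inr b → a.1 ≠ b.1)

namespace AT6

open Finset MvPolynomial

/-! ### small helpers -/

lemma mod_helper {a b n : ℕ} (ha : a < n) (hb : b < n) :
    (a + n - b) % n = if b ≤ a then a - b else a + n - b := by
  rcases le_or_gt b a with h | h
  · have h2 : a + n - b = (a - b) + n := by omega
    rw [if_pos h, h2, Nat.add_mod_right, Nat.mod_eq_of_lt (by omega)]
  · rw [if_neg (by omega), Nat.mod_eq_of_lt (by omega)]

lemma f2a : ∀ x y : Fin 2, x ≠ y ↔ x = 1 - y := by decide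
lemma f2b : ∀ x : Fin 2, ¬ (x = 1 - x) := by decide

lemma prod_monomial {ι σ : Type*} [DecidableEq σ] (F : Finset ι) (g : ι → (σ →₀ ℕ)) :
    (∏ e ∈ F, (monomial (g e) (1 : ℤ))) = monomial (∑ e ∈ F, g e) 1 := by
  induction F using Finset.cons_induction with
  | empty => simp
  | cons a F ha ih => rw [prod_cons, sum_cons, ih, monomial_mul, one_mul]

lemma sum_single_apply {ι σ : Type*} [DecidableEq σ] (F : Finset ι) (h : ι → σ) (v : σ) :
    (∑ e ∈ F, Finsupp.single (h e) (1:ℕ)) v = (F.filter (fun e => h e = v)).card := by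
  classical
  rw [Finset.sum_apply']
  rw [Finset.card_filter]
  exact Finset.sum_congr rfl (fun e _ => Finsupp.single_apply)

/-! ### the expansion: Euler difference = coefficient -/

variable {ι : Type*} [Fintype ι] [DecidableEq ι]

noncomputable def odf (D : Finset (ι × ι)) : ι →₀ ℕ :=
  Finsupp.equivFunOnFinite.symm (BK.outDeg D)

lemma outDeg_split (D S : Finset (ι × ι)) (hS : S ⊆ D) (v : ι) :
    BK.outDeg D v = BK.outDeg S v + BK.outDeg (D \ S) v := by
  unfold BK.outDeg
  rw [← Finset.card_union_of_disjoint, ← Finset.filter_union, Finset.union_sdiff_of_subset hS]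
  exact Finset.disjoint_filter_filter (Finset.disjoint_sdiff)

lemma euler_coeff (D : Finset (ι × ι)) :
    ((BK.eulerEven D : ℤ) - (BK.eulerOdd D : ℤ)) =
      MvPolynomial.coeff (odf D) (∏ e ∈ D, (X e.1 - X e.2 : MvPolynomial ι ℤ)) := by
  classical
  set μ := odf D with hμ
  have hXmon : ∀ (F : Finset (ι × ι)) (h : ι × ι → ι),
      (∏ e ∈ F, (X (h e) : MvPolynomial ι ℤ)) = monomial (∑ e ∈ F, Finsupp.single (h e) 1) 1 := by
    intro F h
    rw [← prod_monomial]
    refine Finset.prod_congr rfl (fun e _ => ?_)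
    rw [← pow_one (X (h e) : MvPolynomial ι ℤ), X_pow_eq_monomial]
  have expand : (∏ e ∈ D, (X e.1 - X e.2 : MvPolynomial ι ℤ))
      = ∑ S ∈ D.powerset, monomial
          ((∑ e ∈ S, Finsupp.single e.2 1) + ∑ e ∈ D \ S, Finsupp.single e.1 1)
          ((-1 : ℤ)^S.card) := by
    have h1 : (∏ e ∈ D, (X e.1 - X e.2 : MvPolynomial ι ℤ))
        = ∏ e ∈ D, ((-X e.2) + X e.1) := by
      refine Finset.prod_congr rfl (fun e _ => by ring)
    rw [h1, Finset.prod_add]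
    refine Finset.sum_congr rfl (fun S hS => ?_)
    have h2 : (∏ e ∈ S, (-X e.2 : MvPolynomial ι ℤ)) = (-1)^S.card * ∏ e ∈ S, X e.2 := by
      rw [← Finset.prod_const, ← Finset.prod_mul_distrib]
      exact Finset.prod_congr rfl (fun e _ => by ring)
    rw [h2, hXmon S (fun e => e.2), hXmon (D \ S) (fun e => e.1), mul_assoc, monomial_mul,
      one_mul]
    have h4 : ((-1 : MvPolynomial ι ℤ))^S.card = C ((-1 : ℤ)^S.card) := by
      simp only [map_pow, map_neg, map_one]
    rw [h4, C_mul_monomial, mul_one]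
  -- now take coefficients
  rw [expand, MvPolynomial.coeff_sum]
  have hterm : ∀ S ∈ D.powerset,
      MvPolynomial.coeff μ (monomial
          ((∑ e ∈ S, Finsupp.single e.2 1) + ∑ e ∈ D \ S, Finsupp.single e.1 1)
          ((-1 : ℤ)^S.card))
        = if BK.IsEulerianSub D S then (-1 : ℤ)^S.card else 0 := by
    intro S hS
    rw [Finset.mem_powerset] at hS
    rw [MvPolynomial.coeff_monomial]
    congr 1
    rw [eq_iff_iff]
    constructor
    · intro h
      refine ⟨hS, fun v => ?_⟩
      have hv := DFunLike.congr_fun h v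
      rw [Finsupp.add_apply, sum_single_apply, sum_single_apply] at hv
      have hμv : μ v = BK.outDeg D v := by
        simp [hμ, odf]
      have hsplit := outDeg_split D S hS v
      unfold BK.outDeg BK.inDeg at *
      omega
    · intro ⟨hsub, hbal⟩
      ext v
      rw [Finsupp.add_apply, sum_single_apply, sum_single_apply]
      have hμv : μ v = BK.outDeg D v := by simp [hμ, odf]
      have hsplit := outDeg_split D S hS v
      have hb := hbal v
      unfold BK.outDeg BK.inDeg at *
      omega
  rw [Finset.sum_congr rfl hterm, Finset.sum_ite, Finset.sum_const_zero, add_zero]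
  -- now split by parity
  unfold BK.eulerEven BK.eulerOdd
  set Q := D.powerset.filter (fun S => BK.IsEulerianSub D S) with hQ
  have hsplit2 : ∑ S ∈ Q, ((-1 : ℤ)^S.card)
      = ∑ S ∈ Q.filter (fun S => Even S.card), ((-1 : ℤ)^S.card)
        + ∑ S ∈ Q.filter (fun S => ¬ Even S.card), ((-1 : ℤ)^S.card) :=
    (Finset.sum_filter_add_sum_filter_not Q _ _).symm
  have he : ∑ S ∈ Q.filter (fun S => Even S.card), ((-1 : ℤ)^S.card)
      = (Q.filter (fun S => Even S.card)).card := by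
    rw [Finset.sum_congr rfl (fun S hS => (Finset.mem_filter.1 hS).2.neg_one_pow),
      Finset.sum_const, nsmul_eq_mul, mul_one]
  have ho : ∑ S ∈ Q.filter (fun S => ¬ Even S.card), ((-1 : ℤ)^S.card)
      = -(Q.filter (fun S => ¬ Even S.card)).card := by
    rw [Finset.sum_congr rfl (fun S hS => (Nat.not_even_iff_odd.1 (Finset.mem_filter.1 hS).2).neg_one_pow),
      Finset.sum_const, nsmul_eq_mul, mul_neg_one]
  rw [hsplit2, he, ho]
  have hEE : Q.filter (fun S => Even S.card)
      = D.powerset.filter (fun E => BK.IsEulerianSub D E ∧ Even E.card) := by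
    rw [hQ, Finset.filter_filter]
  have hEO : Q.filter (fun S => ¬ Even S.card)
      = D.powerset.filter (fun E => BK.IsEulerianSub D E ∧ Odd E.card) := by
    rw [hQ, Finset.filter_filter]
    exact Finset.filter_congr (fun E _ => by rw [← Nat.not_even_iff_odd])
  rw [hEE, hEO]
  ring


/-! ### telescoping division -/

lemma TEL {a b : ι} (hab : a ≠ b) (Q : MvPolynomial ι ℤ) :
    ∀ (m : ℕ) (ν : ι →₀ ℕ), ν b = 0 →
    coeff (ν + Finsupp.single b m) Q
      = ∑ j ∈ range (m+1),
          coeff (ν + Finsupp.single a (j+1) + Finsupp.single b (m - j)) (Q * (X a - X b)) := by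
  intro m
  induction m with
  | zero =>
    intro ν hν
    rw [Finset.sum_range_one]
    simp only [Nat.sub_self, Finsupp.single_zero, add_zero, Nat.zero_add]
    rw [mul_sub, MvPolynomial.coeff_sub]
    rw [MvPolynomial.coeff_mul_X]
    have hz : coeff (ν + Finsupp.single a 1) (Q * X b) = 0 := by
      rw [MvPolynomial.coeff_mul_X', if_neg]
      rw [Finsupp.mem_support_iff]
      push_neg
      simp [Finsupp.add_apply, Finsupp.single_apply, if_neg hab, hν]
    rw [hz, sub_zero]
  | succ m ih =>
    intro ν hν
    have hkey : coeff (ν + Finsupp.single b (m+1)) Q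
        = coeff (ν + Finsupp.single a 1 + Finsupp.single b (m+1)) (Q * (X a - X b))
          + coeff (ν + Finsupp.single a 1 + Finsupp.single b m) Q := by
      have h1 : coeff (ν + Finsupp.single a 1 + Finsupp.single b (m+1)) (Q * X a)
          = coeff (ν + Finsupp.single b (m+1)) Q := by
        have h : ν + Finsupp.single a 1 + Finsupp.single b (m+1)
            = (ν + Finsupp.single b (m+1)) + Finsupp.single a 1 := by abel
        rw [h, MvPolynomial.coeff_mul_X]
      have h2 : coeff (ν + Finsupp.single a 1 + Finsupp.single b (m+1)) (Q * X b)
          = coeff (ν + Finsupp.single a 1 + Finsupp.single b m) Q := by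
        have hsb : (Finsupp.single b (m+1) : ι →₀ ℕ)
            = Finsupp.single b m + Finsupp.single b 1 := by
          rw [← Finsupp.single_add]
        have h : ν + Finsupp.single a 1 + Finsupp.single b (m+1)
            = (ν + Finsupp.single a 1 + Finsupp.single b m) + Finsupp.single b 1 := by
          rw [hsb]; abel
        rw [h, MvPolynomial.coeff_mul_X]
      have h3 : coeff (ν + Finsupp.single a 1 + Finsupp.single b (m+1)) (Q * (X a - X b))
          = coeff (ν + Finsupp.single b (m+1)) Q
            - coeff (ν + Finsupp.single a 1 + Finsupp.single b m) Q := by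
        rw [mul_sub, MvPolynomial.coeff_sub, h1, h2]
      omega
    have hν' : (ν + Finsupp.single a 1 : ι →₀ ℕ) b = 0 := by
      simp [Finsupp.add_apply, Finsupp.single_apply, if_neg hab, hν]
    rw [hkey, ih (ν + Finsupp.single a 1) hν']
    rw [Finset.sum_range_succ' (fun j =>
      coeff (ν + Finsupp.single a (j+1) + Finsupp.single b (m + 1 - j)) (Q * (X a - X b))) (m+1)]
    simp only [Nat.sub_zero, Nat.succ_sub_succ]
    rw [add_comm]
    congr 1
    refine Finset.sum_congr rfl (fun j _ => ?_)
    congr 2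
    have : Finsupp.single a (j+1+1) = Finsupp.single a 1 + Finsupp.single a (j+1) := by
      rw [← Finsupp.single_add]; ring_nf
    rw [this]; abel

/-! ### splitting a sum over piFinset -/

lemma sum_piFinset_update {κ : Type*} [Fintype κ] [DecidableEq κ] {M : Type*} [AddCommMonoid M]
    (F : κ → Finset ℕ) (r₀ : κ) (B : Finset ℕ) (hF : F r₀ = {0})
    (g : (κ → ℕ) → M) :
    ∑ i ∈ Fintype.piFinset (Function.update F r₀ B), g i
      = ∑ j ∈ B, ∑ i ∈ Fintype.piFinset F, g (Function.update i r₀ j) := by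
  classical
  rw [← Finset.sum_product']
  refine Finset.sum_nbij' (fun i => ((i r₀, Function.update i r₀ 0) : ℕ × (κ → ℕ)))
    (fun p => Function.update p.2 r₀ p.1) ?_ ?_ ?_ ?_ ?_
  · intro i hi
    rw [Fintype.mem_piFinset] at hi
    rw [Finset.mem_product]
    refine ⟨?_, ?_⟩
    · have := hi r₀
      rwa [Function.update_apply, if_pos rfl] at this
    · rw [Fintype.mem_piFinset]
      intro r
      rcases eq_or_ne r r₀ with hr | hr
      · subst hr
        simp only [Function.update_apply, if_pos rfl, hF]
        exact Finset.mem_singleton_self 0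
      · simp only [Function.update_apply, if_neg hr]
        have := hi r
        rwa [Function.update_apply, if_neg hr] at this
  · intro p hp
    rw [Finset.mem_product] at hp
    rw [Fintype.mem_piFinset]
    intro r
    rcases eq_or_ne r r₀ with hr | hr
    · subst hr
      simp only [Function.update_apply, if_pos rfl]
      exact hp.1
    · simp only [Function.update_apply, if_neg hr]
      exact (Fintype.mem_piFinset).1 hp.2 r
  · intro i hi
    funext r
    rcases eq_or_ne r r₀ with hr | hr
    · subst hr
      simp [Function.update_apply]
    · simp [Function.update_apply, hr]
  · intro p hp
    rw [Finset.mem_product] at hp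
    have h0 : p.2 r₀ = 0 := by
      have := (Fintype.mem_piFinset).1 hp.2 r₀
      rw [hF, Finset.mem_singleton] at this
      exact this
    refine Prod.ext ?_ ?_
    · simp [Function.update_apply]
    · simp only
      funext r
      rcases eq_or_ne r r₀ with hr | hr
      · subst hr
        simp [Function.update_apply, h0]
      · simp [Function.update_apply, hr]
  · intro i hi
    congr 1
    funext r
    rcases eq_or_ne r r₀ with hr | hr
    · subst hr
      simp [Function.update_apply]
    · simp [Function.update_apply, hr]


/-! ### the construction -/

section Main

variable (s t : ℕ) (w : Fin t → Fin 2)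

abbrev VV := Fin s ⊕ Fin t × Fin 2

def av (r : Fin t) : VV s t := Sum.inr (r, w r)
def bv (r : Fin t) : VV s t := Sum.inr (r, 1 - w r)

lemma av_inj : Function.Injective (av s t w) := by
  intro r r' h
  simpa [av] using congrArg (fun v => match v with | Sum.inr z => z.1 | Sum.inl _ => r) h

lemma bv_inj : Function.Injective (bv s t w) := by
  intro r r' h
  simpa [bv] using congrArg (fun v => match v with | Sum.inr z => z.1 | Sum.inl _ => r) h

lemma av_ne_bv (x y : Fin t) : av s t w x ≠ bv s t w y := by
  intro h
  simp only [av, bv, Sum.inr.injEq, Prod.mk.injEq] at h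
  exact f2b (w x) (h.1 ▸ h.2)

def qf (z : Fin t × Fin 2) : ℕ := if z.2 = w z.1 then (z.1 : ℕ) else (z.1 : ℕ) + t

lemma qf_lt (z : Fin t × Fin 2) : qf t w z < 2 * t := by
  have := z.1.isLt
  unfold qf; split <;> omega

lemma qf_inj : Function.Injective (qf t w) := by
  intro z z' h
  have h1 := z.1.isLt
  have h2 := z'.1.isLt
  have hfst : z.1 = z'.1 := by
    have h' := h
    unfold qf at h'
    split at h' <;> split at h' <;> exact Fin.ext (by omega)
  refine Prod.ext hfst ?_
  unfold qf at h
  rw [hfst] at h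
  split at h <;> split at h
  · rename_i ha hb; exact ha.trans hb.symm
  · omega
  · omega
  · rename_i ha hb
    rw [(f2a z.2 (w z'.1)).1 ha, (f2a z'.2 (w z'.1)).1 hb]

def dd (x y : Fin t × Fin 2) : ℕ := (qf t w y + 2*t - qf t w x) % (2*t)

lemma dd_eq (x y : Fin t × Fin 2) :
    dd t w x y = if qf t w x ≤ qf t w y then qf t w y - qf t w x
      else qf t w y + 2*t - qf t w x := by
  unfold dd
  rw [mod_helper (qf_lt t w y) (qf_lt t w x)]

lemma dd_self (x : Fin t × Fin 2) : dd t w x x = 0 := by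
  rw [dd_eq]; simp

lemma dd_pos {x y : Fin t × Fin 2} (h : x ≠ y) : 1 ≤ dd t w x y := by
  have hq : qf t w x ≠ qf t w y := fun hc => h (qf_inj t w hc)
  have h1 := qf_lt t w x
  have h2 := qf_lt t w y
  rw [dd_eq]; split <;> omega

lemma dd_lt (x y : Fin t × Fin 2) : dd t w x y < 2 * t := by
  have := x.1.isLt
  unfold dd
  exact Nat.mod_lt _ (by omega)

lemma dd_antisym {x y : Fin t × Fin 2} (h : x ≠ y) :
    dd t w x y + dd t w y x = 2 * t := by
  have hq : qf t w x ≠ qf t w y := fun hc => h (qf_inj t w hc)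
  have h1 := qf_lt t w x
  have h2 := qf_lt t w y
  rw [dd_eq, dd_eq]; split <;> split <;> omega

lemma dd_same_pair {x y : Fin t × Fin 2} (hfst : x.1 = y.1) (h : x ≠ y) :
    dd t w x y = t := by
  have h1 := x.1.isLt
  have hsnd : x.2 ≠ y.2 := by
    intro hc; exact h (Prod.ext hfst hc)
  rw [dd_eq]
  unfold qf
  rw [hfst] at *
  by_cases hx : x.2 = w y.1
  · have hy : ¬ (y.2 = w y.1) := fun hc => hsnd (hx.trans hc.symm)
    rw [if_pos hx, if_neg hy]
    split <;> omega
  · have hy : y.2 = w y.1 := by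
      have hx2 := (f2a x.2 (w y.1)).1 hx
      have := f2a y.2 (w y.1)
      by_contra hyc
      exact hsnd (hx2.trans ((f2a y.2 (w y.1)).1 hyc).symm)
    rw [if_neg hx, if_pos hy]
    split <;> omega

lemma dd_ne_pair {x y : Fin t × Fin 2} (hfst : x.1 ≠ y.1) : dd t w x y ≠ t := by
  have h1 := x.1.isLt
  have h2 := y.1.isLt
  have hv : (x.1 : ℕ) ≠ (y.1 : ℕ) := fun hc => hfst (Fin.ext hc)
  rw [dd_eq]
  unfold qf
  split <;> split <;> split <;> omega

/-- the arc predicate -/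
def arcP : VV s t × VV s t → Prop
  | (Sum.inl k, Sum.inl j) => (j : ℕ) < (k : ℕ)
  | (Sum.inl _, Sum.inr y) => y.2 ≠ w y.1
  | (Sum.inr x, Sum.inl _) => x.2 = w x.1
  | (Sum.inr x, Sum.inr y) => 1 ≤ dd t w x y ∧ dd t w x y ≤ t - 1

noncomputable def DD : Finset (VV s t × VV s t) := Finset.univ.filter (arcP s t w)

lemma mem_DD {p : VV s t × VV s t} : p ∈ DD s t w ↔ arcP s t w p := by
  unfold DD
  simp [Finset.mem_filter]

lemma adj_iff_inr (x y : Fin t × Fin 2) :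
    (KsJoinK2t s t).Adj (Sum.inr x) (Sum.inr y) ↔ x.1 ≠ y.1 := by
  rw [KsJoinK2t, SimpleGraph.fromRel_adj]
  constructor
  · rintro ⟨hne, h | h⟩
    · exact h x y rfl rfl
    · exact (h y x rfl rfl).symm
  · intro h
    refine ⟨fun hc => h (by injection hc with h'; rw [h']), Or.inl ?_⟩
    rintro a b ha hb
    injection ha with ha'
    injection hb with hb'
    rw [← ha', ← hb']
    exact h

lemma adj_iff_inl_left (k : Fin s) (v : VV s t) :
    (KsJoinK2t s t).Adj (Sum.inl k) v ↔ Sum.inl k ≠ v := by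
  rw [KsJoinK2t, SimpleGraph.fromRel_adj]
  constructor
  · exact fun h => h.1
  · intro h
    exact ⟨h, Or.inl (by rintro a b hab; cases hab)⟩

lemma orient : BK.IsOrientation (KsJoinK2t s t) (DD s t w) := by
  constructor
  · intro u v
    rcases u with k | x <;> rcases v with j | y
    · rw [adj_iff_inl_left, mem_DD, mem_DD]
      show _ ↔ ((j : ℕ) < (k : ℕ) ∨ (k : ℕ) < (j : ℕ))
      rw [ne_eq, Sum.inl.injEq]
      rw [show (k = j) ↔ ((k:ℕ) = (j:ℕ)) from ⟨fun h => h ▸ rfl, fun h => Fin.ext h⟩]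
      omega
    · rw [adj_iff_inl_left, mem_DD, mem_DD]
      show _ ↔ (y.2 ≠ w y.1 ∨ y.2 = w y.1)
      constructor
      · intro _; exact (em (y.2 = w y.1)).symm
      · intro _; simp
    · rw [KsJoinK2t, SimpleGraph.fromRel_adj, mem_DD, mem_DD]
      show _ ↔ (x.2 = w x.1 ∨ x.2 ≠ w x.1)
      constructor
      · intro _; exact (em (x.2 = w x.1))
      · intro _
        refine ⟨by simp, Or.inr ?_⟩
        rintro a b hab; cases hab
    · rw [adj_iff_inr, mem_DD, mem_DD]
      show x.1 ≠ y.1 ↔ ((1 ≤ dd t w x y ∧ dd t w x y ≤ t - 1) ∨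
        (1 ≤ dd t w y x ∧ dd t w y x ≤ t - 1))
      constructor
      · intro h
        have hne : x ≠ y := fun hc => h (hc ▸ rfl)
        have h1 := dd_pos t w hne
        have h2 := dd_pos t w hne.symm
        have h3 := dd_antisym t w hne
        have h4 := dd_ne_pair t w h
        have h5 := dd_ne_pair t w (Ne.symm h)
        have h6 := x.1.isLt
        omega
      · intro h hfst
        rcases eq_or_ne x y with hxy | hxy
        · rw [hxy, dd_self] at h
          have := y.1.isLt
          omega
        · have h1 := dd_same_pair t w hfst hxy
          have h2 := dd_same_pair t w (hfst.symm) hxy.symm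
          have := x.1.isLt
          omega
  · intro u v huv hvu
    rw [mem_DD] at huv hvu
    rcases u with k | x <;> rcases v with j | y
    · have h1 : (j:ℕ) < (k:ℕ) := huv
      have h2 : (k:ℕ) < (j:ℕ) := hvu
      omega
    · have h1 : y.2 ≠ w y.1 := huv
      have h2 : y.2 = w y.1 := hvu
      exact h1 h2
    · have h1 : x.2 = w x.1 := huv
      have h2 : x.2 ≠ w x.1 := hvu
      exact h2 h1
    · have h1 : 1 ≤ dd t w x y ∧ dd t w x y ≤ t - 1 := huv
      have h2 : 1 ≤ dd t w y x ∧ dd t w y x ≤ t - 1 := hvu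
      have hne : x ≠ y := by
        intro hc
        rw [hc, dd_self] at h1
        omega
      have h3 := dd_antisym t w hne
      have := x.1.isLt
      omega


/-! ### out-degree computations -/

lemma card_filter_sum {α β : Type*} [Fintype α] [Fintype β] [DecidableEq α] [DecidableEq β]
    (p : α ⊕ β → Prop) :
    (Finset.univ.filter p).card
      = (Finset.univ.filter (fun a => p (Sum.inl a))).card
        + (Finset.univ.filter (fun b => p (Sum.inr b))).card := by
  classical
  have key : Finset.univ.filter p
      = ((Finset.univ.filter (fun a => p (Sum.inl a))).map ⟨Sum.inl, Sum.inl_injective⟩)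
        ∪ ((Finset.univ.filter (fun b => p (Sum.inr b))).map ⟨Sum.inr, Sum.inr_injective⟩) := by
    ext x
    rcases x with a | b <;> simp
  rw [key, Finset.card_union_of_disjoint, Finset.card_map, Finset.card_map]
  rw [Finset.disjoint_left]
  rintro x hx hy
  simp only [Finset.mem_map, Function.Embedding.coeFn_mk] at hx hy
  obtain ⟨a, _, ha⟩ := hx
  obtain ⟨b, _, hb⟩ := hy
  rw [← ha] at hb
  cases hb

lemma outDeg_DD (v : VV s t) :
    BK.outDeg (DD s t w) v = (Finset.univ.filter (fun u => arcP s t w (v, u))).card := by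
  unfold BK.outDeg DD
  rw [Finset.filter_filter]
  refine Finset.card_nbij' (fun p => p.2) (fun u => (v, u)) ?_ ?_ ?_ ?_
  · intro p hp
    rw [Finset.mem_coe, Finset.mem_filter] at hp
    rw [Finset.mem_coe, Finset.mem_filter]
    obtain ⟨-, h1, h2⟩ := hp
    refine ⟨Finset.mem_univ _, ?_⟩
    have h3 : (v, p.2) = p := by rw [← h2]
    rw [h3]
    exact h1
  · intro u hu
    rw [Finset.mem_coe, Finset.mem_filter] at hu ⊢
    exact ⟨Finset.mem_univ _, hu.2, rfl⟩
  · intro p hp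
    rw [Finset.mem_coe, Finset.mem_filter] at hp
    rw [← hp.2.2]
  · intro u _
    rfl

lemma card_arc_ll (k : Fin s) :
    (Finset.univ.filter (fun j : Fin s => arcP s t w (Sum.inl k, Sum.inl j))).card = (k : ℕ) := by
  have hks := k.isLt
  have hcard : (Finset.univ.filter (fun j : Fin s => arcP s t w (Sum.inl k, Sum.inl j))).card
      = (Finset.range (k:ℕ)).card := by
    refine Finset.card_bij' (fun j _ => (j : ℕ))
      (fun m hm => ⟨m, by rw [Finset.mem_range] at hm; omega⟩) ?_ ?_ ?_ ?_
    · intro j hj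
      rw [Finset.mem_filter] at hj
      rw [Finset.mem_range]
      exact hj.2
    · intro m hm
      have hm' := hm
      rw [Finset.mem_range] at hm'
      rw [Finset.mem_filter]
      exact ⟨Finset.mem_univ _, hm'⟩
    · intro j _
      rfl
    · intro m _
      rfl
  rw [hcard, Finset.card_range]

lemma card_arc_lr (k : Fin s) :
    (Finset.univ.filter (fun z : Fin t × Fin 2 => arcP s t w (Sum.inl k, Sum.inr z))).card
      = t := by
  have hcard : (Finset.univ.filter (fun z : Fin t × Fin 2 => arcP s t w (Sum.inl k, Sum.inr z))).card
      = (Finset.univ : Finset (Fin t)).card := by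
    refine Finset.card_nbij' (fun z => z.1) (fun r => (r, 1 - w r)) ?_ ?_ ?_ ?_
    · intro z _; exact Finset.mem_univ _
    · intro r _
      rw [Finset.mem_coe, Finset.mem_filter]
      exact ⟨Finset.mem_univ _, (f2a _ _).2 rfl⟩
    · intro z hz
      rw [Finset.mem_coe, Finset.mem_filter] at hz
      have hz2 : z.2 ≠ w z.1 := hz.2
      exact Prod.ext rfl ((f2a z.2 (w z.1)).1 hz2).symm
    · intro r _; rfl
  rw [hcard, Finset.card_univ, Fintype.card_fin]

lemma mod_helper2 {c d n : ℕ} (hn : 0 < n) (hc : c < n) :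
    ((c + d % n) % n + n - c) % n = d % n := by
  have hd : d % n < n := Nat.mod_lt _ hn
  rcases Nat.lt_or_ge (c + d % n) n with h | h
  · rw [Nat.mod_eq_of_lt h, mod_helper (by omega) hc, if_pos (by omega)]
    omega
  · have h2 : (c + d % n) % n = c + d % n - n := by
      rw [Nat.mod_eq_sub_mod h, Nat.mod_eq_of_lt (by omega)]
    rw [h2, mod_helper (by omega) hc, if_neg (by omega)]
    omega

lemma q_surj : ∀ m < 2 * t, ∃ z : Fin t × Fin 2, qf t w z = m := by
  intro m hm
  rcases Nat.lt_or_ge m t with h | h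
  · exact ⟨(⟨m, h⟩, w ⟨m, h⟩), by unfold qf; rw [if_pos rfl]⟩
  · refine ⟨(⟨m - t, by omega⟩, 1 - w ⟨m - t, by omega⟩), ?_⟩
    unfold qf
    rw [if_neg (fun hc => f2b _ hc.symm)]
    show (m - t) + t = m
    omega

lemma dd_of_q {x y : Fin t × Fin 2} {d : ℕ} (hd : d < 2*t)
    (hy : qf t w y = (qf t w x + d) % (2*t)) : dd t w x y = d := by
  have ht : 0 < t := x.1.pos
  unfold dd
  rw [hy]
  have h := mod_helper2 (c := qf t w x) (d := d) (n := 2*t) (by omega) (qf_lt t w x)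
  rwa [Nat.mod_eq_of_lt hd] at h

lemma q_of_dd (x y : Fin t × Fin 2) :
    qf t w y = (qf t w x + dd t w x y) % (2*t) := by
  have hx := qf_lt t w x
  have hy := qf_lt t w y
  rw [dd_eq]
  split
  · rename_i h
    rw [show qf t w x + (qf t w y - qf t w x) = qf t w y from by omega,
      Nat.mod_eq_of_lt (qf_lt t w y)]
  · rename_i h
    rw [show qf t w x + (qf t w y + 2*t - qf t w x) = qf t w y + 2*t from by omega,
      Nat.add_mod_right, Nat.mod_eq_of_lt (qf_lt t w y)]

lemma card_arc_rr (x : Fin t × Fin 2) :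
    (Finset.univ.filter (fun y : Fin t × Fin 2 =>
      arcP s t w (Sum.inr x, Sum.inr y))).card = t - 1 := by
  have ht : 0 < t := x.1.pos
  have hq := qf_lt t w x
  choose g hg using q_surj t w
  have hcard : (Finset.univ.filter (fun y : Fin t × Fin 2 =>
      arcP s t w (Sum.inr x, Sum.inr y))).card = (Finset.Icc 1 (t-1)).card := by
    refine Finset.card_bij' (fun y _ => dd t w x y)
      (fun d _ => g ((qf t w x + d) % (2*t)) (Nat.mod_lt _ (by omega))) ?_ ?_ ?_ ?_
    · intro y hy
      rw [Finset.mem_filter] at hy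
      rw [Finset.mem_Icc]
      exact hy.2
    · intro d hd
      rw [Finset.mem_Icc] at hd
      rw [Finset.mem_filter]
      refine ⟨Finset.mem_univ _, ?_⟩
      show 1 ≤ dd t w x _ ∧ dd t w x _ ≤ t - 1
      rw [dd_of_q t w (show d < 2*t by omega) (hg _ _)]
      exact hd
    · intro y hy
      apply qf_inj t w
      rw [hg _ _]
      exact (q_of_dd t w x y).symm
    · intro d hd
      rw [Finset.mem_Icc] at hd
      exact dd_of_q t w (show d < 2*t by omega) (hg _ _)
  rw [hcard, Nat.card_Icc]
  omega

lemma outDeg_inl (k : Fin s) :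
    BK.outDeg (DD s t w) (Sum.inl k) = t + (k : ℕ) := by
  rw [outDeg_DD, card_filter_sum, card_arc_ll, card_arc_lr]
  omega

lemma outDeg_inr (z : Fin t × Fin 2) :
    BK.outDeg (DD s t w) (Sum.inr z)
      = if z.2 = w z.1 then s + t - 1 else t - 1 := by
  have ht : 0 < t := z.1.pos
  rw [outDeg_DD, card_filter_sum, card_arc_rr]
  by_cases h : z.2 = w z.1
  · rw [if_pos h]
    have h1 : (Finset.univ.filter (fun k : Fin s => arcP s t w (Sum.inr z, Sum.inl k))).card
        = s := by
      have e : (Finset.univ.filter (fun k : Fin s => arcP s t w (Sum.inr z, Sum.inl k)))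
          = Finset.univ := Finset.filter_eq_self.2 (fun _ _ => h)
      rw [e, Finset.card_univ, Fintype.card_fin]
    rw [h1]
    omega
  · rw [if_neg h]
    have h1 : (Finset.univ.filter (fun k : Fin s => arcP s t w (Sum.inr z, Sum.inl k))).card
        = 0 := by
      have e : (Finset.univ.filter (fun k : Fin s => arcP s t w (Sum.inr z, Sum.inl k)))
          = ∅ := Finset.filter_eq_empty_iff.2 (fun _ _ => h)
      rw [e, Finset.card_empty]
    rw [h1]
    omega

/-! ### the exponent functions -/

def Efun (S : Finset (Fin t)) (i : Fin t → ℕ) : VV s t → ℕ :=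
  Sum.elim (fun k => t + (k : ℕ))
    (fun z => if z.2 = w z.1 then (if z.1 ∈ S then s + t + i z.1 else s + t - 1)
      else (if z.1 ∈ S then t - 1 - i z.1 else t - 1))

lemma Efun_inl (S : Finset (Fin t)) (i : Fin t → ℕ) (k : Fin s) :
    Efun s t w S i (Sum.inl k) = t + (k : ℕ) := rfl

lemma Efun_inr (S : Finset (Fin t)) (i : Fin t → ℕ) (z : Fin t × Fin 2) :
    Efun s t w S i (Sum.inr z)
      = if z.2 = w z.1 then (if z.1 ∈ S then s + t + i z.1 else s + t - 1)
        else (if z.1 ∈ S then t - 1 - i z.1 else t - 1) := rfl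

noncomputable def EF (S : Finset (Fin t)) (i : Fin t → ℕ) : VV s t →₀ ℕ :=
  Finsupp.equivFunOnFinite.symm (Efun s t w S i)

lemma EF_apply (S : Finset (Fin t)) (i : Fin t → ℕ) (v : VV s t) :
    EF s t w S i v = Efun s t w S i v := rfl

lemma odf_eq : odf (DD s t w) = EF s t w ∅ 0 := by
  unfold odf EF
  congr 1
  funext v
  rcases v with k | z
  · rw [show BK.outDeg (DD s t w) (Sum.inl k) = t + (k:ℕ) from outDeg_inl s t w k]
    rfl
  · rw [show BK.outDeg (DD s t w) (Sum.inr z)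
      = if z.2 = w z.1 then s + t - 1 else t - 1 from outDeg_inr s t w z]
    show _ = Efun s t w ∅ 0 (Sum.inr z)
    rw [Efun_inr]
    simp only [Finset.notMem_empty, if_false]

/-! ### iterated telescope -/

noncomputable def PP : MvPolynomial (VV s t) ℤ := ∏ e ∈ DD s t w, (X e.1 - X e.2)

lemma EF_erase_add (S : Finset (Fin t)) (i : Fin t → ℕ) (r₀ : Fin t) (h₀ : r₀ ∉ S) :
    EF s t w S i
      = (EF s t w S i).erase (bv s t w r₀) + Finsupp.single (bv s t w r₀) (t - 1) := by
  ext v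
  rw [Finsupp.add_apply, Finsupp.erase_apply, Finsupp.single_apply]
  by_cases hv : v = bv s t w r₀
  · subst hv
    rw [if_pos rfl, if_pos rfl, EF_apply]
    show Efun s t w S i (Sum.inr (r₀, 1 - w r₀)) = 0 + (t-1)
    rw [Efun_inr]
    rw [if_neg (fun hc => f2b (w r₀) (by exact hc.symm)), if_neg h₀]
    omega
  · rw [if_neg hv, if_neg (fun hc => hv hc.symm), add_zero]

lemma EF_shift (S : Finset (Fin t)) (i : Fin t → ℕ) (r₀ : Fin t) (h₀ : r₀ ∉ S) (j : ℕ) :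
    (EF s t w S i).erase (bv s t w r₀) + Finsupp.single (av s t w r₀) (j+1)
        + Finsupp.single (bv s t w r₀) (t - 1 - j)
      = EF s t w (insert r₀ S) (Function.update i r₀ j) := by
  have ht : 0 < t := r₀.pos
  ext v
  rw [Finsupp.add_apply, Finsupp.add_apply, Finsupp.erase_apply, Finsupp.single_apply,
    Finsupp.single_apply, EF_apply, EF_apply]
  rcases v with k | z
  · have h1 : ¬ ((Sum.inl k : VV s t) = bv s t w r₀) := by simp [bv]
    have h2 : ¬ (av s t w r₀ = (Sum.inl k : VV s t)) := by simp [av]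
    have h3 : ¬ (bv s t w r₀ = (Sum.inl k : VV s t)) := by simp [bv]
    rw [if_neg h1, if_neg h2, if_neg h3]
    rfl
  · obtain ⟨r, ε⟩ := z
    rcases eq_or_ne r r₀ with hr | hr
    · subst hr
      by_cases hε : ε = w r
      · subst hε
        have h1 : ¬ ((Sum.inr (r, w r) : VV s t) = bv s t w r) :=
          fun hc => av_ne_bv s t w r r hc
        have h2 : av s t w r = (Sum.inr (r, w r) : VV s t) := rfl
        have h3 : ¬ (bv s t w r = (Sum.inr (r, w r) : VV s t)) :=
          fun hc => av_ne_bv s t w r r hc.symm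
        rw [if_neg h1, if_pos h2, if_neg h3, Efun_inr, Efun_inr]
        simp [h₀, Function.update_apply] <;> omega
      · have hε' : ε = 1 - w r := (f2a ε (w r)).1 hε
        subst hε'
        have h1 : (Sum.inr (r, 1 - w r) : VV s t) = bv s t w r := rfl
        have h2 : ¬ (av s t w r = (Sum.inr (r, 1 - w r) : VV s t)) := av_ne_bv s t w r r
        have h3 : bv s t w r = (Sum.inr (r, 1 - w r) : VV s t) := rfl
        rw [if_pos h1, if_pos h3, if_neg h2, Efun_inr]
        have hne : ¬ (((r, 1 - w r) : Fin t × Fin 2).2 = w ((r, 1 - w r) : Fin t × Fin 2).1) :=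
          fun hc => f2b (w r) (by exact hc.symm)
        simp [hne, h₀, Function.update_apply] <;> omega
    · have h1 : ¬ ((Sum.inr (r, ε) : VV s t) = bv s t w r₀) := by
        intro hc
        injection hc with hc'
        exact hr (congrArg Prod.fst hc')
      have h2 : ¬ (av s t w r₀ = (Sum.inr (r, ε) : VV s t)) := by
        intro hc
        injection hc with hc'
        exact hr (congrArg Prod.fst hc').symm
      have h3 : ¬ (bv s t w r₀ = (Sum.inr (r, ε) : VV s t)) := by
        intro hc
        injection hc with hc'
        exact hr (congrArg Prod.fst hc').symm
      rw [if_neg h1, if_neg h2, if_neg h3, Efun_inr, Efun_inr]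
      rw [Function.update_apply, if_neg hr]
      by_cases hε : ε = w r <;> by_cases hS : r ∈ S <;>
        simp [hε, hS, Finset.mem_insert, hr]

lemma ITER (S : Finset (Fin t)) :
    coeff (EF s t w ∅ 0) (PP s t w)
      = ∑ i ∈ Fintype.piFinset
            (fun r => if r ∈ S then Finset.range t else ({0} : Finset ℕ)),
          coeff (EF s t w S i)
            (PP s t w * ∏ r ∈ S, (X (av s t w r) - X (bv s t w r))) := by
  induction S using Finset.induction_on with
  | empty =>
    have hpi : Fintype.piFinset
        (fun r : Fin t => if r ∈ (∅ : Finset (Fin t)) then Finset.range t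
          else ({0} : Finset ℕ)) = {fun _ => 0} := by
      ext i
      simp [Fintype.mem_piFinset, funext_iff]
    rw [hpi, Finset.sum_singleton, Finset.prod_empty, mul_one]
    rfl
  | @insert r₀ S h₀ ih =>
    rw [ih]
    have hfam : (fun r : Fin t => if r ∈ insert r₀ S then Finset.range t
          else ({0} : Finset ℕ))
        = Function.update (fun r : Fin t => if r ∈ S then Finset.range t
          else ({0} : Finset ℕ)) r₀ (Finset.range t) := by
      funext r
      rcases eq_or_ne r r₀ with hr | hr
      · subst hr
        simp [Function.update_apply]
      · simp [Function.update_apply, hr, Finset.mem_insert]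
    rw [hfam, sum_piFinset_update _ r₀ _ (by simp [h₀]) _, Finset.sum_comm]
    refine Finset.sum_congr rfl (fun i hi => ?_)
    have ht : 0 < t := r₀.pos
    have hrw := TEL (a := av s t w r₀) (b := bv s t w r₀) (av_ne_bv s t w r₀ r₀)
        (PP s t w * ∏ r ∈ S, (X (av s t w r) - X (bv s t w r))) (t-1)
        ((EF s t w S i).erase (bv s t w r₀)) (Finsupp.erase_same)
    rw [← EF_erase_add s t w S i r₀ h₀] at hrw
    rw [hrw, show t - 1 + 1 = t from by omega]
    refine Finset.sum_congr rfl (fun j hj => ?_)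
    rw [← EF_shift s t w S i r₀ h₀ j]
    congr 1
    rw [Finset.prod_insert h₀]
    ring

/-! ### Vandermonde comparison -/

lemma cardVV : Fintype.card (VV s t) = s + 2*t := by
  simp only [VV, Fintype.card_sum, Fintype.card_prod, Fintype.card_fin]
  ring

lemma Efun_univ_lt (i : Fin t → ℕ) (hb : ∀ r, i r < t) (v : VV s t) :
    Efun s t w Finset.univ i v < s + 2*t := by
  rcases v with k | z
  · have := k.isLt
    rw [Efun_inl]
    omega
  · have ht := z.1.pos
    have := hb z.1
    rw [Efun_inr]
    simp only [Finset.mem_univ, if_true]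
    split <;> omega

lemma Efun_univ_inj (i : Fin t → ℕ) (hb : ∀ r, i r < t) (hi : Function.Injective i) :
    Function.Injective (Efun s t w Finset.univ i) := by
  intro u v h
  rcases u with k | z <;> rcases v with k' | z'
  · rw [Efun_inl, Efun_inl] at h
    exact congrArg Sum.inl (Fin.ext (by omega))
  · exfalso
    have hk := k.isLt
    have h1 := hb z'.1
    have h2 := z'.1.pos
    rw [Efun_inl, Efun_inr] at h
    simp only [Finset.mem_univ, if_true] at h
    split at h <;> omega
  · exfalso
    have hk := k'.isLt
    have h1 := hb z.1
    have h2 := z.1.pos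
    rw [Efun_inl, Efun_inr] at h
    simp only [Finset.mem_univ, if_true] at h
    split at h <;> omega
  · rw [Efun_inr, Efun_inr] at h
    simp only [Finset.mem_univ, if_true] at h
    have h1 := hb z.1
    have h2 := hb z'.1
    have ht := z.1.pos
    split at h <;> split at h <;> rename_i ha hb'
    · have hfst : z.1 = z'.1 := hi (by omega)
      exact congrArg Sum.inr (Prod.ext hfst (by rw [ha, hb', hfst]))
    · omega
    · omega
    · have hfst : z.1 = z'.1 := hi (by omega)
      exact congrArg Sum.inr (Prod.ext hfst
        (by rw [(f2a _ _).1 ha, (f2a _ _).1 hb', hfst]))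

noncomputable def gE (i : Fin t → ℕ) (hb : ∀ r, i r < t) (hi : Function.Injective i) :
    VV s t ≃ Fin (s + 2*t) :=
  Equiv.ofBijective (fun v => ⟨Efun s t w Finset.univ i v, Efun_univ_lt s t w i hb v⟩)
    ((Fintype.bijective_iff_injective_and_card _).2
      ⟨fun u v h => Efun_univ_inj s t w i hb hi (by
        have := congrArg Fin.val h
        exact this), (cardVV s t).trans (Fintype.card_fin _).symm⟩)

lemma gE_val (i : Fin t → ℕ) (hb : ∀ r, i r < t) (hi : Function.Injective i) (v : VV s t) :
    ((gE s t w i hb hi v : Fin (s+2*t)) : ℕ) = Efun s t w Finset.univ i v := rfl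

noncomputable def ev : VV s t ≃ Fin (s + 2*t) :=
  gE s t w (fun r => (r : ℕ)) (fun r => r.isLt) Fin.val_injective

noncomputable def VDM : MvPolynomial (VV s t) ℤ :=
  (Matrix.vandermonde
    (fun m : Fin (s + 2*t) => (X ((ev s t w).symm m) : MvPolynomial (VV s t) ℤ))).det

noncomputable def MS : Finset (VV s t × VV s t) :=
  Finset.univ.image (fun r : Fin t => (av s t w r, bv s t w r))

lemma mem_MS {p : VV s t × VV s t} :
    p ∈ MS s t w ↔ ∃ r, p = (av s t w r, bv s t w r) := by
  unfold MS
  simp [eq_comm]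

lemma MS_not_DD : Disjoint (DD s t w) (MS s t w) := by
  rw [Finset.disjoint_left]
  intro p hD hM
  rw [mem_MS] at hM
  obtain ⟨r, rfl⟩ := hM
  rw [mem_DD] at hD
  have hdd : dd t w (r, w r) (r, 1 - w r) = t :=
    dd_same_pair t w rfl (fun hc => f2b (w r) (congrArg Prod.snd hc))
  have hD' : 1 ≤ dd t w (r, w r) (r, 1 - w r) ∧ dd t w (r, w r) (r, 1 - w r) ≤ t - 1 := hD
  have ht := r.pos
  omega

noncomputable def TT : Finset (VV s t × VV s t) := DD s t w ∪ MS s t w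

lemma PP_mul_MM :
    PP s t w * (∏ r : Fin t, (X (av s t w r) - X (bv s t w r)))
      = ∏ p ∈ TT s t w, ((X p.1 - X p.2) : MvPolynomial (VV s t) ℤ) := by
  unfold TT PP
  rw [Finset.prod_union (MS_not_DD s t w)]
  congr 1
  unfold MS
  rw [Finset.prod_image (fun r _ r' _ h => av_inj s t w (congrArg Prod.fst h))]

lemma MS_nonadj {u v : VV s t} (h : (KsJoinK2t s t).Adj u v) : (u, v) ∉ MS s t w := by
  intro hm
  rw [mem_MS] at hm
  obtain ⟨r, hr⟩ := hm
  have h1 : u = av s t w r := congrArg Prod.fst hr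
  have h2 : v = bv s t w r := congrArg Prod.snd hr
  rw [h1, h2] at h
  unfold av bv at h
  rw [adj_iff_inr] at h
  exact h rfl

lemma TT_total {u v : VV s t} (hne : u ≠ v) :
    ((u,v) ∈ TT s t w ∨ (v,u) ∈ TT s t w)
      ∧ ¬ (((u,v) ∈ TT s t w) ∧ ((v,u) ∈ TT s t w)) := by
  obtain ⟨hadj, hanti⟩ := orient s t w
  unfold TT
  simp only [Finset.mem_union]
  by_cases hA : (KsJoinK2t s t).Adj u v
  · have hm1 := MS_nonadj s t w hA
    have hm2 := MS_nonadj s t w hA.symm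
    have h1 := (hadj u v).1 hA
    constructor
    · rcases h1 with h | h
      · exact Or.inl (Or.inl h)
      · exact Or.inr (Or.inl h)
    · rintro ⟨hx | hx, hy | hy⟩
      · exact hanti u v hx hy
      · exact hm2 hy
      · exact hm1 hx
      · exact hm1 hx
  · have hDD : ∀ a b : VV s t, ¬ (KsJoinK2t s t).Adj a b → (a,b) ∉ DD s t w :=
      fun a b hab hc => hab ((hadj a b).2 (Or.inl hc))
    rcases u with k | x <;> rcases v with k' | y
    · exact absurd ((adj_iff_inl_left s t k (Sum.inl k')).2 hne) hA
    · exact absurd ((adj_iff_inl_left s t k (Sum.inr y)).2 hne) hA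
    · exact absurd (((adj_iff_inl_left s t k' (Sum.inr x)).2 (by simp)).symm) hA
    · rw [adj_iff_inr] at hA
      push_neg at hA
      have hxy : x ≠ y := fun hc => hne (congrArg Sum.inr hc)
      have hnd1 : (Sum.inr x, Sum.inr y) ∉ DD s t w := by
        apply hDD
        rw [adj_iff_inr]
        exact fun hc => hc hA
      have hnd2 : (Sum.inr y, Sum.inr x) ∉ DD s t w := by
        apply hDD
        rw [adj_iff_inr]
        exact fun hc => hc hA.symm
      have hsnd : x.2 ≠ y.2 := fun hc => hxy (Prod.ext hA hc)
      have hMS_side : ∀ p ∈ MS s t w, ∃ r : Fin t,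
          p.1 = av s t w r ∧ p.2 = bv s t w r := by
        intro p hp
        rw [mem_MS] at hp
        obtain ⟨r, hr⟩ := hp
        exact ⟨r, congrArg Prod.fst hr, congrArg Prod.snd hr⟩
      by_cases hx : x.2 = w x.1
      · have hy : y.2 = 1 - w y.1 := by
          refine (f2a y.2 (w y.1)).1 ?_
          intro hc
          rw [← hA] at hc
          exact hsnd (hx.trans hc.symm)
        have hav : av s t w x.1 = Sum.inr x := congrArg Sum.inr (Prod.ext rfl hx.symm)
        have hbv : bv s t w x.1 = Sum.inr y := by
          refine congrArg Sum.inr (Prod.ext hA ?_)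
          rw [hy, hA]
        have hMm : (Sum.inr x, Sum.inr y) ∈ MS s t w := by
          rw [mem_MS]
          exact ⟨x.1, by rw [hav, hbv]⟩
        have hMn : (Sum.inr y, Sum.inr x) ∉ MS s t w := by
          intro hc
          obtain ⟨r, hr1, hr2⟩ := hMS_side _ hc
          have : y.2 = w y.1 := by
            have h1 : (Sum.inr y : VV s t) = Sum.inr (r, w r) := hr1
            injection h1 with h1'
            rw [h1']
          rw [hy] at this
          exact f2b (w y.1) this.symm
        constructor
        · exact Or.inl (Or.inr hMm)
        · rintro ⟨-, hy2 | hy2⟩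
          · exact hnd2 hy2
          · exact hMn hy2
      · have hx' : x.2 = 1 - w x.1 := (f2a x.2 (w x.1)).1 hx
        have hy : y.2 = w y.1 := by
          by_contra hc
          have := (f2a y.2 (w y.1)).1 hc
          rw [← hA] at this
          exact hsnd (by rw [hx', this])
        have hav : av s t w y.1 = Sum.inr y := congrArg Sum.inr (Prod.ext rfl hy.symm)
        have hbv : bv s t w y.1 = Sum.inr x := by
          refine congrArg Sum.inr (Prod.ext hA.symm ?_)
          rw [hx', hA]
        have hMm : (Sum.inr y, Sum.inr x) ∈ MS s t w := by
          rw [mem_MS]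
          exact ⟨y.1, by rw [hav, hbv]⟩
        have hMn : (Sum.inr x, Sum.inr y) ∉ MS s t w := by
          intro hc
          obtain ⟨r, hr1, hr2⟩ := hMS_side _ hc
          have : x.2 = w x.1 := by
            have h1 : (Sum.inr x : VV s t) = Sum.inr (r, w r) := hr1
            injection h1 with h1'
            rw [h1']
          exact hx this
        constructor
        · exact Or.inr (Or.inr hMm)
        · rintro ⟨hy2 | hy2, -⟩
          · exact hnd1 hy2
          · exact hMn hy2

lemma TT_ne {p : VV s t × VV s t} (hp : p ∈ TT s t w) : p.1 ≠ p.2 := by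
  obtain ⟨u, v⟩ := p
  unfold TT at hp
  rw [Finset.mem_union] at hp
  intro hc
  rcases hp with hp | hp
  · rw [mem_DD] at hp
    rcases u with k | x <;> rcases v with k' | y
    · have h1 : (k' : ℕ) < (k : ℕ) := hp
      injection hc with hc'
      omega
    · cases hc
    · cases hc
    · have h1 : 1 ≤ dd t w x y ∧ dd t w x y ≤ t - 1 := hp
      injection hc with hc'
      rw [hc', dd_self] at h1
      omega
  · rw [mem_MS] at hp
    obtain ⟨r, hr⟩ := hp
    have h1 : u = av s t w r := congrArg Prod.fst hr
    have h2 : v = bv s t w r := congrArg Prod.snd hr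
    refine av_ne_bv s t w r r ?_
    rw [← h1, ← h2]
    exact hc

noncomputable def epsT : ℤ :=
  ∏ p ∈ TT s t w, (if (ev s t w p.1 : Fin (s+2*t)) < ev s t w p.2 then (-1:ℤ) else 1)

lemma epsT_ne : epsT s t w ≠ 0 := by
  unfold epsT
  rw [Finset.prod_ne_zero_iff]
  intro p _
  split <;> omega

noncomputable def mif (p : VV s t × VV s t) : Σ _ : Fin (s+2*t), Fin (s+2*t) :=
  if (ev s t w p.1 : Fin (s+2*t)) < ev s t w p.2 then ⟨ev s t w p.1, ev s t w p.2⟩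
  else ⟨ev s t w p.2, ev s t w p.1⟩

noncomputable def psi (x : Σ _ : Fin (s+2*t), Fin (s+2*t)) : VV s t × VV s t :=
  if ((ev s t w).symm x.1, (ev s t w).symm x.2) ∈ TT s t w
  then ((ev s t w).symm x.1, (ev s t w).symm x.2)
  else ((ev s t w).symm x.2, (ev s t w).symm x.1)

lemma prod_TT_eq :
    ∏ p ∈ TT s t w, ((X p.1 - X p.2) : MvPolynomial (VV s t) ℤ)
      = C (epsT s t w) * VDM s t w := by
  have hfac : ∀ p ∈ TT s t w, ((X p.1 - X p.2) : MvPolynomial (VV s t) ℤ)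
      = C (if (ev s t w p.1 : Fin (s+2*t)) < ev s t w p.2 then (-1:ℤ) else 1)
        * (X ((ev s t w).symm (mif s t w p).2) - X ((ev s t w).symm (mif s t w p).1)) := by
    intro p hp
    have hne := TT_ne s t w hp
    unfold mif
    by_cases hlt : (ev s t w p.1 : Fin (s+2*t)) < ev s t w p.2
    · rw [if_pos hlt, if_pos hlt]
      simp only [Equiv.symm_apply_apply, map_neg, map_one]
      ring
    · rw [if_neg hlt, if_neg hlt]
      simp only [Equiv.symm_apply_apply, map_one]
      ring
  rw [Finset.prod_congr rfl hfac, Finset.prod_mul_distrib, ← map_prod]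
  congr 1
  unfold VDM
  rw [Matrix.det_vandermonde, Finset.prod_sigma']
  refine Finset.prod_nbij' (mif s t w) (psi s t w) ?_ ?_ ?_ ?_ ?_
  · intro p hp
    have hne := TT_ne s t w hp
    have hev : (ev s t w) p.1 ≠ (ev s t w) p.2 := fun hc => hne ((ev s t w).injective hc)
    rw [Finset.mem_sigma]
    unfold mif
    by_cases hlt : (ev s t w p.1 : Fin (s+2*t)) < ev s t w p.2
    · rw [if_pos hlt]
      exact ⟨Finset.mem_univ _, Finset.mem_Ioi.2 hlt⟩
    · rw [if_neg hlt]
      refine ⟨Finset.mem_univ _, Finset.mem_Ioi.2 ?_⟩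
      rcases lt_or_eq_of_le (not_lt.1 hlt) with h | h
      · exact h
      · exact absurd h.symm hev
  · intro x hx
    rw [Finset.mem_sigma, Finset.mem_Ioi] at hx
    have hne : (ev s t w).symm x.1 ≠ (ev s t w).symm x.2 := by
      intro hc
      have := (ev s t w).symm.injective hc
      exact absurd this (ne_of_lt hx.2)
    unfold psi
    rcases (TT_total s t w hne).1 with h | h
    · rw [if_pos h]
      exact h
    · by_cases hmem : ((ev s t w).symm x.1, (ev s t w).symm x.2) ∈ TT s t w
      · rw [if_pos hmem]; exact hmem
      · rw [if_neg hmem]; exact h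
  · intro p hp
    have hne := TT_ne s t w hp
    have hrev : (p.2, p.1) ∉ TT s t w := by
      intro hc
      exact (TT_total s t w hne).2 ⟨by rw [show (p.1, p.2) = p from rfl]; exact hp, hc⟩
    unfold mif psi
    by_cases hlt : (ev s t w p.1 : Fin (s+2*t)) < ev s t w p.2
    · rw [if_pos hlt]
      simp only [Equiv.symm_apply_apply]
      rw [if_pos (by rw [show (p.1, p.2) = p from rfl]; exact hp)]
    · rw [if_neg hlt]
      simp only [Equiv.symm_apply_apply]
      rw [if_neg (by exact hrev)]
  · intro x hx
    rw [Finset.mem_sigma, Finset.mem_Ioi] at hx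
    have hne : (ev s t w).symm x.1 ≠ (ev s t w).symm x.2 := by
      intro hc
      exact absurd ((ev s t w).symm.injective hc) (ne_of_lt hx.2)
    unfold psi mif
    by_cases hmem : ((ev s t w).symm x.1, (ev s t w).symm x.2) ∈ TT s t w
    · rw [if_pos hmem]
      simp only [Equiv.apply_symm_apply]
      rw [if_pos hx.2]
    · rw [if_neg hmem]
      simp only [Equiv.apply_symm_apply]
      rw [if_neg (by exact fun hc => absurd (lt_trans hc hx.2) (lt_irrefl _))]
  · intro p hp
    rfl

lemma PMV : PP s t w * (∏ r : Fin t, (X (av s t w r) - X (bv s t w r)))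
    = C (epsT s t w) * VDM s t w := by
  rw [PP_mul_MM, prod_TT_eq]

/-! ### coefficient of the Vandermonde determinant -/

lemma VDM_expand : VDM s t w
    = ∑ σ : Equiv.Perm (Fin (s+2*t)),
        C ((Equiv.Perm.sign σ : ℤ)) *
          monomial (∑ m : Fin (s+2*t),
            Finsupp.single ((ev s t w).symm (σ m)) ((m : ℕ))) 1 := by
  unfold VDM
  rw [Matrix.det_apply]
  refine Finset.sum_congr rfl (fun σ _ => ?_)
  rw [Units.smul_def, MvPolynomial.smul_eq_C_mul]
  have hent : ∀ m : Fin (s+2*t),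
      (Matrix.vandermonde (fun m : Fin (s + 2*t) =>
        (X ((ev s t w).symm m) : MvPolynomial (VV s t) ℤ))) (σ m) m
      = monomial (Finsupp.single ((ev s t w).symm (σ m)) ((m : ℕ))) 1 := by
    intro m
    rw [Matrix.vandermonde_apply, X_pow_eq_monomial]
  rw [Finset.prod_congr rfl (fun m _ => hent m), prod_monomial]

lemma dsig_apply (σ : Equiv.Perm (Fin (s+2*t))) (v : VV s t) :
    (∑ m : Fin (s+2*t), Finsupp.single ((ev s t w).symm (σ m)) ((m : ℕ))) v
      = ((σ.symm (ev s t w v)) : ℕ) := by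
  rw [Finset.sum_apply']
  rw [Finset.sum_eq_single (σ.symm (ev s t w v))]
  · rw [Finsupp.single_apply, if_pos]
    rw [Equiv.apply_symm_apply, Equiv.symm_apply_apply]
  · intro m _ hm
    rw [Finsupp.single_apply, if_neg]
    intro hc
    apply hm
    have := congrArg (ev s t w) hc
    rw [Equiv.apply_symm_apply] at this
    exact σ.injective (by rw [this, Equiv.apply_symm_apply])
  · intro h
    exact absurd (Finset.mem_univ _) h

lemma coeff_VDM_eq (i : Fin t → ℕ) :
    coeff (EF s t w Finset.univ i) (VDM s t w)
      = ∑ σ : Equiv.Perm (Fin (s+2*t)),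
          (if (∀ v : VV s t, ((σ.symm (ev s t w v)) : ℕ) = Efun s t w Finset.univ i v)
            then ((Equiv.Perm.sign σ : ℤ)) else 0) := by
  rw [VDM_expand, MvPolynomial.coeff_sum]
  refine Finset.sum_congr rfl (fun σ _ => ?_)
  rw [MvPolynomial.coeff_C_mul, MvPolynomial.coeff_monomial]
  by_cases h : (∀ v : VV s t, ((σ.symm (ev s t w v)) : ℕ) = Efun s t w Finset.univ i v)
  · rw [if_pos h, if_pos, mul_one]
    ext v
    rw [dsig_apply, EF_apply]
    exact h v
  · rw [if_neg h, if_neg, mul_zero]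
    intro hc
    apply h
    intro v
    rw [← dsig_apply s t w σ v, hc, EF_apply]

lemma coeff_VDM_notinj (i : Fin t → ℕ) (hni : ¬ Function.Injective i) :
    coeff (EF s t w Finset.univ i) (VDM s t w) = 0 := by
  rw [coeff_VDM_eq]
  refine Finset.sum_eq_zero (fun σ _ => ?_)
  rw [if_neg]
  intro hall
  apply hni
  intro r r' hrr
  have h1 := hall (av s t w r)
  have h2 := hall (av s t w r')
  have e1 : Efun s t w Finset.univ i (av s t w r) = s + t + i r := by
    rw [av, Efun_inr]
    simp
  have e2 : Efun s t w Finset.univ i (av s t w r') = s + t + i r' := by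
    rw [av, Efun_inr]
    simp
  rw [e1] at h1
  rw [e2] at h2
  have hav : av s t w r = av s t w r' := by
    apply (ev s t w).injective
    apply σ.symm.injective
    apply Fin.ext
    rw [h1, h2, hrr]
  exact av_inj s t w hav

noncomputable def sigI (i : Fin t → ℕ) (hb : ∀ r, i r < t) (hi : Function.Injective i) :
    Equiv.Perm (Fin (s+2*t)) :=
  (gE s t w i hb hi).symm.trans (ev s t w)

lemma sigI_spec (i : Fin t → ℕ) (hb : ∀ r, i r < t) (hi : Function.Injective i) (v : VV s t) :
    (((sigI s t w i hb hi).symm (ev s t w v)) : ℕ) = Efun s t w Finset.univ i v := by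
  unfold sigI
  rw [Equiv.symm_trans_apply, Equiv.symm_apply_apply, Equiv.symm_symm]
  exact gE_val s t w i hb hi v

lemma coeff_VDM_inj (i : Fin t → ℕ) (hb : ∀ r, i r < t) (hi : Function.Injective i) :
    coeff (EF s t w Finset.univ i) (VDM s t w)
      = ((Equiv.Perm.sign (sigI s t w i hb hi) : ℤ)) := by
  rw [coeff_VDM_eq]
  rw [Finset.sum_eq_single (sigI s t w i hb hi)]
  · rw [if_pos (sigI_spec s t w i hb hi)]
  · intro σ _ hne
    rw [if_neg]
    intro hall
    apply hne
    have hsymm : σ.symm = (sigI s t w i hb hi).symm := by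
      apply Equiv.ext
      intro m
      have h1 := hall ((ev s t w).symm m)
      have h2 := sigI_spec s t w i hb hi ((ev s t w).symm m)
      rw [Equiv.apply_symm_apply] at h1 h2
      exact Fin.ext (h1.trans h2.symm)
    have := congrArg Equiv.symm hsymm
    rwa [Equiv.symm_symm, Equiv.symm_symm] at this
  · intro h
    exact absurd (Finset.mem_univ _) h

/-! ### the sign is 1 -/

def tauf (π : Equiv.Perm (Fin t)) : VV s t → VV s t :=
  Sum.elim (fun k => Sum.inl k)
    (fun z => if z.2 = w z.1 then av s t w (π z.1) else bv s t w (π z.1))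

lemma tauf_tauf (π ρ : Equiv.Perm (Fin t)) (v : VV s t) :
    tauf s t w π (tauf s t w ρ v) = tauf s t w (π * ρ) v := by
  rcases v with k | z
  · rfl
  · unfold tauf
    by_cases h : z.2 = w z.1
    · rw [Sum.elim_inr, Sum.elim_inr, if_pos h, if_pos h]
      unfold av
      rw [Sum.elim_inr, if_pos rfl]
      rfl
    · rw [Sum.elim_inr, Sum.elim_inr, if_neg h, if_neg h]
      unfold bv
      rw [Sum.elim_inr, if_neg (fun hc => f2b (w (ρ z.1)) (by exact hc.symm))]
      rfl

lemma tauf_id (v : VV s t) : tauf s t w 1 v = v := by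
  rcases v with k | z
  · rfl
  · unfold tauf
    by_cases h : z.2 = w z.1
    · rw [Sum.elim_inr, if_pos h]
      unfold av
      rw [Equiv.Perm.one_apply]
      exact congrArg Sum.inr (Prod.ext rfl h.symm)
    · rw [Sum.elim_inr, if_neg h]
      unfold bv
      rw [Equiv.Perm.one_apply]
      exact congrArg Sum.inr (Prod.ext rfl ((f2a z.2 (w z.1)).1 h).symm)

noncomputable def tauP (π : Equiv.Perm (Fin t)) : Equiv.Perm (VV s t) where
  toFun := tauf s t w π
  invFun := tauf s t w π.symm
  left_inv := by
    intro v
    rw [tauf_tauf]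
    have h1 : π.symm * π = 1 := by ext r; simp
    rw [h1, tauf_id]
  right_inv := by
    intro v
    rw [tauf_tauf]
    have h1 : π * π.symm = 1 := by ext r; simp
    rw [h1, tauf_id]

lemma tauP_apply (π : Equiv.Perm (Fin t)) (v : VV s t) :
    tauP s t w π v = tauf s t w π v := rfl

lemma tauP_mul (π ρ : Equiv.Perm (Fin t)) :
    tauP s t w (π * ρ) = tauP s t w π * tauP s t w ρ := by
  apply Equiv.ext
  intro v
  rw [Equiv.Perm.mul_apply, tauP_apply, tauP_apply, tauP_apply, tauf_tauf]

lemma tauP_one : tauP s t w 1 = 1 := by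
  apply Equiv.ext
  intro v
  rw [tauP_apply, tauf_id]
  rfl

lemma tauP_swap (x y : Fin t) (hxy : x ≠ y) :
    tauP s t w (Equiv.swap x y)
      = Equiv.swap (av s t w x) (av s t w y) * Equiv.swap (bv s t w x) (bv s t w y) := by
  apply Equiv.ext
  intro v
  rw [Equiv.Perm.mul_apply, tauP_apply]
  rcases v with k | z
  · unfold tauf
    rw [Sum.elim_inl]
    rw [Equiv.swap_apply_of_ne_of_ne (show (Sum.inl k : VV s t) ≠ bv s t w x by simp [bv])
        (show (Sum.inl k : VV s t) ≠ bv s t w y by simp [bv]),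
      Equiv.swap_apply_of_ne_of_ne (show (Sum.inl k : VV s t) ≠ av s t w x by simp [av])
        (show (Sum.inl k : VV s t) ≠ av s t w y by simp [av])]
  · unfold tauf
    rw [Sum.elim_inr]
    by_cases h : z.2 = w z.1
    · rw [if_pos h]
      have hz : (Sum.inr z : VV s t) = av s t w z.1 :=
        congrArg Sum.inr (Prod.ext rfl h)
      rw [hz]
      rw [Equiv.swap_apply_of_ne_of_ne (av_ne_bv s t w z.1 x) (av_ne_bv s t w z.1 y)]
      rcases eq_or_ne z.1 x with h1 | h1
      · rw [h1, Equiv.swap_apply_left, Equiv.swap_apply_left]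
      · rcases eq_or_ne z.1 y with h2 | h2
        · rw [h2, Equiv.swap_apply_right, Equiv.swap_apply_right]
        · rw [Equiv.swap_apply_of_ne_of_ne h1 h2,
            Equiv.swap_apply_of_ne_of_ne (fun hc => h1 (av_inj s t w hc))
              (fun hc => h2 (av_inj s t w hc))]
    · rw [if_neg h]
      have hz : (Sum.inr z : VV s t) = bv s t w z.1 :=
        congrArg Sum.inr (Prod.ext rfl ((f2a z.2 (w z.1)).1 h))
      rw [hz]
      rcases eq_or_ne z.1 x with h1 | h1
      · rw [h1, Equiv.swap_apply_left, Equiv.swap_apply_left,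
          Equiv.swap_apply_of_ne_of_ne (fun hc => av_ne_bv s t w x y hc.symm)
            (fun hc => av_ne_bv s t w y y hc.symm)]
      · rcases eq_or_ne z.1 y with h2 | h2
        · rw [h2, Equiv.swap_apply_right, Equiv.swap_apply_right,
            Equiv.swap_apply_of_ne_of_ne (fun hc => av_ne_bv s t w x x hc.symm)
              (fun hc => av_ne_bv s t w y x hc.symm)]
        · rw [Equiv.swap_apply_of_ne_of_ne h1 h2,
            Equiv.swap_apply_of_ne_of_ne (fun hc => h1 (bv_inj s t w hc))
              (fun hc => h2 (bv_inj s t w hc)),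
            Equiv.swap_apply_of_ne_of_ne (fun hc => av_ne_bv s t w x z.1 hc.symm)
              (fun hc => av_ne_bv s t w y z.1 hc.symm)]

lemma sign_tauP (π : Equiv.Perm (Fin t)) : Equiv.Perm.sign (tauP s t w π) = 1 := by
  refine Equiv.Perm.swap_induction_on π ?_ ?_
  · rw [tauP_one, map_one]
  · intro f x y hxy hf
    rw [tauP_mul, map_mul, hf, tauP_swap s t w x y hxy, map_mul,
      Equiv.Perm.sign_swap (fun hc => hxy (av_inj s t w hc)),
      Equiv.Perm.sign_swap (fun hc => hxy (bv_inj s t w hc))]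
    norm_num

lemma sign_sigI (i : Fin t → ℕ) (hb : ∀ r, i r < t) (hi : Function.Injective i) :
    Equiv.Perm.sign (sigI s t w i hb hi) = 1 := by
  set π : Equiv.Perm (Fin t) := Equiv.ofBijective (fun r => (⟨i r, hb r⟩ : Fin t))
    ((Fintype.bijective_iff_injective_and_card _).2
      ⟨fun r r' h => hi (congrArg Fin.val h), rfl⟩) with hπ
  have hπval : ∀ r, ((π r : Fin t) : ℕ) = i r := fun r => rfl
  have hg : gE s t w i hb hi = (tauP s t w π).trans (ev s t w) := by
    apply Equiv.ext
    intro v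
    apply Fin.ext
    rw [gE_val]
    show Efun s t w Finset.univ i v = ((ev s t w) (tauP s t w π v) : ℕ)
    rcases v with k | z
    · rfl
    · rw [tauP_apply]
      unfold tauf
      rw [Sum.elim_inr]
      by_cases h : z.2 = w z.1
      · rw [if_pos h]
        have e1 : Efun s t w Finset.univ i (Sum.inr z) = s + t + i z.1 := by
          rw [Efun_inr, if_pos h, if_pos (Finset.mem_univ z.1)]
        have e2 : ((ev s t w) (av s t w (π z.1)) : ℕ) = s + t + i z.1 := by
          show Efun s t w Finset.univ (fun r => (r : ℕ)) (av s t w (π z.1)) = s + t + i z.1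
          unfold av
          rw [Efun_inr, if_pos rfl, if_pos (Finset.mem_univ _)]
          rfl
        rw [e1, e2]
      · rw [if_neg h]
        have e1 : Efun s t w Finset.univ i (Sum.inr z) = t - 1 - i z.1 := by
          rw [Efun_inr, if_neg h, if_pos (Finset.mem_univ z.1)]
        have e2 : ((ev s t w) (bv s t w (π z.1)) : ℕ) = t - 1 - i z.1 := by
          show Efun s t w Finset.univ (fun r => (r : ℕ)) (bv s t w (π z.1)) = t - 1 - i z.1
          unfold bv
          rw [Efun_inr, if_neg (fun hc => f2b (w (π z.1)) (by exact hc.symm)),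
            if_pos (Finset.mem_univ _)]
          rfl
        rw [e1, e2]
  have hs : sigI s t w i hb hi
      = (((ev s t w).symm.trans (tauP s t w π).symm).trans (ev s t w)) := by
    unfold sigI
    rw [hg]
    rfl
  rw [hs, Equiv.Perm.sign_symm_trans_trans]
  have hinv : (tauP s t w π).symm = (tauP s t w π)⁻¹ := rfl
  rw [hinv, map_inv, sign_tauP]
  rfl

/-! ### the coefficient is nonzero -/

lemma coeff_PP_ne : coeff (EF s t w ∅ 0) (PP s t w) ≠ 0 := by
  have hfam : (fun r : Fin t => if r ∈ (Finset.univ : Finset (Fin t)) then Finset.range t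
      else ({0} : Finset ℕ)) = fun _ : Fin t => Finset.range t := by
    funext r
    simp
  have hiter := ITER s t w Finset.univ
  rw [hfam] at hiter
  rw [hiter]
  have hterm : ∀ i ∈ Fintype.piFinset (fun _ : Fin t => Finset.range t),
      coeff (EF s t w Finset.univ i)
          (PP s t w * ∏ r ∈ Finset.univ, (X (av s t w r) - X (bv s t w r)))
        = epsT s t w * (if Function.Injective i then 1 else 0) := by
    intro i hi
    have hb : ∀ r, i r < t := fun r => Finset.mem_range.1 ((Fintype.mem_piFinset).1 hi r)
    rw [PMV, MvPolynomial.coeff_C_mul]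
    by_cases hinj : Function.Injective i
    · rw [if_pos hinj, coeff_VDM_inj s t w i hb hinj, sign_sigI s t w i hb hinj]
      norm_num
    · rw [if_neg hinj, coeff_VDM_notinj s t w i hinj, mul_zero]
  rw [Finset.sum_congr rfl hterm, ← Finset.mul_sum]
  apply mul_ne_zero (epsT_ne s t w)
  rw [← Finset.sum_filter, Finset.sum_const, nsmul_eq_mul, mul_one]
  have hmem : (fun r : Fin t => (r : ℕ))
      ∈ (Fintype.piFinset fun _ : Fin t => Finset.range t).filter Function.Injective := by
    rw [Finset.mem_filter]
    refine ⟨?_, Fin.val_injective⟩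
    rw [Fintype.mem_piFinset]
    exact fun r => Finset.mem_range.2 r.isLt
  intro hc
  rw [Int.natCast_eq_zero, Finset.card_eq_zero] at hc
  rw [hc] at hmem
  exact absurd hmem (Finset.notMem_empty _)

end Main
end AT6

/-- `K_s ∗ K_{2*t}` is `f`-AT when `f ≥ s + t` on some `(s+t)`-clique `A` and
`f ≥ t` elsewhere. -/
theorem stmt6 (s t : ℕ) (A : Finset ((Fin s) ⊕ (Fin t × Fin 2)))
    (hA : (KsJoinK2t s t).IsClique ↑A) (hcard : A.card = s + t)
    (f : (Fin s) ⊕ (Fin t × Fin 2) → ℕ)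
    (hfA : ∀ v ∈ A, s + t ≤ f v) (hfB : ∀ v ∉ A, t ≤ f v) :
    BK.IsAT (KsJoinK2t s t) f := by
  classical
  set φ : (Fin s ⊕ Fin t × Fin 2) → (Fin s ⊕ Fin t) := Sum.map id Prod.fst with hφ
  have hinj : Set.InjOn φ ↑A := by
    intro u hu v hv huv
    by_contra hne
    have hadj := hA hu hv hne
    rcases u with k | x <;> rcases v with k' | y
    · apply hne
      have : k = k' := by simpa [hφ, φ] using huv
      rw [this]
    · simp [hφ, φ] at huv
    · simp [hφ, φ] at huv
    · rw [AT6.adj_iff_inr] at hadj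
      have : x.1 = y.1 := by simpa [hφ, φ] using huv
      exact hadj this
  have himg : A.image φ = Finset.univ := by
    apply Finset.eq_univ_of_card
    rw [Finset.card_image_of_injOn hinj, hcard]
    simp [Fintype.card_sum, Fintype.card_fin]
  have hmem : ∀ u : Fin s ⊕ Fin t, ∃ v ∈ A, φ v = u := by
    intro u
    have : u ∈ A.image φ := by rw [himg]; exact Finset.mem_univ u
    exact Finset.mem_image.1 this
  have hinl : ∀ k : Fin s, Sum.inl k ∈ A := by
    intro k
    obtain ⟨v, hv, hφv⟩ := hmem (Sum.inl k)
    rcases v with k' | z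
    · have : k' = k := by simpa [hφ, φ] using hφv
      rwa [this] at hv
    · simp [hφ, φ] at hφv
  have hone : ∀ r : Fin t, ∃ ε : Fin 2, Sum.inr (r, ε) ∈ A := by
    intro r
    obtain ⟨v, hv, hφv⟩ := hmem (Sum.inr r)
    rcases v with k | z
    · simp [hφ, φ] at hφv
    · have hz : z.1 = r := by simpa [hφ, φ] using hφv
      refine ⟨z.2, ?_⟩
      rw [← hz]
      exact hv
  have huniq : ∀ (r : Fin t) (ε ε' : Fin 2),
      Sum.inr (r, ε) ∈ A → Sum.inr (r, ε') ∈ A → ε = ε' := by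
    intro r ε ε' h1 h2
    have := hinj (Finset.mem_coe.2 h1) (Finset.mem_coe.2 h2) (by simp [hφ, φ])
    have h3 : ((r, ε) : Fin t × Fin 2) = (r, ε') := by
      injection this
    exact congrArg Prod.snd h3
  set w : Fin t → Fin 2 := fun r => if Sum.inr (r, (0 : Fin 2)) ∈ A then 0 else 1 with hw
  have hwmem : ∀ (r : Fin t) (ε : Fin 2), Sum.inr (r, ε) ∈ A ↔ ε = w r := by
    intro r ε
    rw [hw]
    by_cases h0 : Sum.inr (r, (0 : Fin 2)) ∈ A
    · simp only [if_pos h0]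
      constructor
      · intro hε
        exact huniq r ε 0 hε h0
      · intro hε
        rwa [hε]
    · simp only [if_neg h0]
      obtain ⟨ε₀, hε₀⟩ := hone r
      have hε₀1 : ε₀ = 1 := by
        have hne : ε₀ ≠ 0 := fun hc => h0 (by rwa [hc] at hε₀)
        have : ∀ x : Fin 2, x ≠ 0 → x = 1 := by decide
        exact this ε₀ hne
      constructor
      · intro hε
        exact (huniq r ε ε₀ hε hε₀).trans hε₀1
      · intro hε
        rw [hε, ← hε₀1]
        exact hε₀
  refine ⟨AT6.DD s t w, AT6.orient s t w, ?_, ?_⟩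
  · intro v
    rcases v with k | z
    · rw [AT6.outDeg_inl]
      have hk := k.isLt
      have := hfA _ (hinl k)
      omega
    · rw [AT6.outDeg_inr]
      have ht := z.1.pos
      by_cases h : z.2 = w z.1
      · rw [if_pos h]
        have hz : Sum.inr z ∈ A := (hwmem z.1 z.2).2 h
        have := hfA _ hz
        omega
      · rw [if_neg h]
        have hz : Sum.inr z ∉ A := fun hc => h ((hwmem z.1 z.2).1 hc)
        have := hfB _ hz
        omega
  · have hco := AT6.euler_coeff (AT6.DD s t w)
    rw [AT6.odf_eq] at hco
    have hne := AT6.coeff_PP_ne s t w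
    unfold AT6.PP at hne
    intro hEq
    apply hne
    rw [← hco, hEq, sub_self]
end

section
/- Let G be the complement of a bipartite graph with parts A and B, where |A| = ω(G). Then G is a subgraph of K_{|A|−|B|} ∗ K_{2*|B|}, i.e., the complement of G contains a matching saturating B whose edges go between A and B. -/
open scoped Classical

/-- The clique number of a finite graph. -/
noncomputable def cliqueNum {V : Type*} [Fintype V] [DecidableEq V]
    (G : SimpleGraph V) : ℕ :=
  (Finset.univ.powerset.filter (fun s : Finset V => G.IsClique ↑s)).sup Finset.card

/-- If `G` is the complement of a bipartite graph with parts `A` and `B` and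
`|A| = ω(G)`, then the complement of `G` contains a matching saturating `B`
whose edges go between `A` and `B`; hence `G ⊆ K_{|A|-|B|} ∗ K_{2*|B|}`. -/
theorem stmt8 {V : Type*} [Fintype V] [DecidableEq V] (G : SimpleGraph V)
    (A B : Finset V) (hpart : ∀ v, v ∈ A ∨ v ∈ B) (hdisj : Disjoint A B)
    (hA : G.IsClique ↑A) (hB : G.IsClique ↑B)
    (hsize : B.card ≤ A.card) (homega : A.card = cliqueNum G) :
    ∃ m : V → V, Set.InjOn m ↑B ∧ ∀ b ∈ B, m b ∈ A ∧ ¬ G.Adj b (m b) := by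
  classical
  set r : {x // x ∈ B} → Finset V := fun b => A.filter (fun a => ¬ G.Adj ↑b a) with hr
  have hall : ∀ s : Finset {x // x ∈ B}, s.card ≤ (s.biUnion r).card := by
    intro s
    by_contra hlt
    push_neg at hlt
    set N := s.biUnion r with hN
    have hNA : N ⊆ A := by
      intro a ha
      rcases Finset.mem_biUnion.mp ha with ⟨b, _, hb⟩
      exact (Finset.mem_filter.mp hb).1
    set S := s.image Subtype.val with hS
    have hSB : S ⊆ B := by
      intro v hv
      rcases Finset.mem_image.mp hv with ⟨b, _, rfl⟩
      exact b.2
    have hScard : S.card = s.card := Finset.card_image_of_injective _ Subtype.val_injective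
    set C := (A \ N) ∪ S with hC
    have hdisj2 : Disjoint (A \ N) S :=
      (hdisj.mono_left (Finset.sdiff_subset)).mono_right hSB
    have hCcard : C.card = (A \ N).card + S.card := Finset.card_union_of_disjoint hdisj2
    have hclique : G.IsClique ↑C := by
      intro u hu v hv huv
      simp only [hC, Finset.coe_union, Set.mem_union, Finset.coe_sdiff, Set.mem_diff] at hu hv
      have key : ∀ x y : V, (x ∈ A ∧ x ∉ N) → y ∈ S → x ≠ y → G.Adj x y := by
        intro x y hx hy hxy
        rcases Finset.mem_image.mp hy with ⟨b, hb, rfl⟩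
        have : x ∉ r b := fun h => hx.2 (Finset.mem_biUnion.mpr ⟨b, hb, h⟩)
        simp only [hr, Finset.mem_filter, hx.1, true_and, not_not] at this
        exact this.symm
      rcases hu with hu | hu <;> rcases hv with hv | hv
      · exact hA (by simpa using hu.1) (by simpa using hv.1) huv
      · exact key u v (by simpa using hu) (by simpa using hv) huv
      · exact (key v u (by simpa using hv) (by simpa using hu) (Ne.symm huv)).symm
      · exact hB (hSB (by simpa using hu)) (hSB (by simpa using hv)) huv
    have hle : C.card ≤ cliqueNum G := by
      apply Finset.le_sup (f := Finset.card)
      simp [Finset.mem_filter, hclique]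
    have hNlt : N.card < s.card := hlt
    have : A.card < C.card := by
      have h1 : (A \ N).card = A.card - N.card := Finset.card_sdiff_of_subset hNA
      have h2 : N.card ≤ A.card := Finset.card_le_card hNA
      omega
    omega
  obtain ⟨f, hfinj, hf⟩ := (Finset.all_card_le_biUnion_card_iff_existsInjective' r).mp hall
  refine ⟨fun v => if h : v ∈ B then f ⟨v, h⟩ else v, ?_, ?_⟩
  · intro x hx y hy hxy
    simp only [Finset.mem_coe] at hx hy
    simp only [dif_pos hx, dif_pos hy] at hxy
    exact Subtype.ext_iff.mp (hfinj hxy)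
  · intro b hb
    simp only [dif_pos hb]
    have := hf ⟨b, hb⟩
    simp only [hr, Finset.mem_filter] at this
    exact this
end
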